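/- arXiv:1906.01469 — 5 statements merged into one kernel-verified Lean document; each statement's English description precedes it below -/
import Mathlib

section
/- An unconditional lattice polytope P ⊂ ℝ^d with 0 in its interior is reflexive if and only if P = U(P_G) for some perfect graph G on [d], where U(P_G) = {p : (|p_1|,...,|p_d|) ∈ P_G}. -/
open Finset

/-- Dot product on `ℝ^d`. -/
def dot {d : ℕ} (x y : Fin d → ℝ) : ℝ := ∑ i, x i * y i

/-- Coordinatewise absolute value. -/
def absVec {d : ℕ} (p : Fin d → ℝ) : Fin d → ℝ := fun i => |p i|

/-- A vector of signs `±1`. -/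
def IsSignVec {d : ℕ} (σ : Fin d → ℝ) : Prop := ∀ i, σ i = 1 ∨ σ i = -1

/-- Coordinatewise sign flip. -/
def sflip {d : ℕ} (σ p : Fin d → ℝ) : Fin d → ℝ := fun i => σ i * p i

/-- A set is unconditional if it is closed under coordinate sign flips. -/
def Unconditional {d : ℕ} (K : Set (Fin d → ℝ)) : Prop :=
  ∀ σ : Fin d → ℝ, IsSignVec σ → ∀ p ∈ K, sflip σ p ∈ K

/-- A (nonempty) polytope: the convex hull of a nonempty finite set. -/
def IsPolytope {d : ℕ} (P : Set (Fin d → ℝ)) : Prop :=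
  ∃ V : Finset (Fin d → ℝ), V.Nonempty ∧ P = convexHull ℝ (V : Set (Fin d → ℝ))

/-- The nonnegative orthant of `ℝ^d`. -/
def nonnegOrthant (d : ℕ) : Set (Fin d → ℝ) := {x | ∀ i, 0 ≤ x i}

/-- An anti-blocking polytope: a polytope in the nonnegative orthant that is
down-closed with respect to the componentwise order. -/
def IsAntiBlocking {d : ℕ} (P : Set (Fin d → ℝ)) : Prop :=
  IsPolytope P ∧ P ⊆ nonnegOrthant d ∧
    ∀ q ∈ P, ∀ p : Fin d → ℝ, (∀ i, 0 ≤ p i ∧ p i ≤ q i) → p ∈ P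

/-- The unconditional set associated to a set `P`: all points whose vector of
absolute values lies in `P`. -/
def UPoly {d : ℕ} (P : Set (Fin d → ℝ)) : Set (Fin d → ℝ) := {p | absVec p ∈ P}

/-- Cast an integer vector to a real vector. -/
def intCast {d : ℕ} (a : Fin d → ℤ) : Fin d → ℝ := fun i => (a i : ℝ)

/-- A lattice polytope: convex hull of a nonempty finite set of integer points. -/
def IsLatticePolytope {d : ℕ} (P : Set (Fin d → ℝ)) : Prop :=
  ∃ V : Finset (Fin d → ℤ), V.Nonempty ∧ P = convexHull ℝ (intCast '' (V : Set (Fin d → ℤ)))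

/-- Reflexive polytope: `0` is interior and `P` is cut out by integral
inequalities with right-hand side `1`. -/
def IsReflexive {d : ℕ} (P : Set (Fin d → ℝ)) : Prop :=
  0 ∈ interior P ∧
    ∃ A : Finset (Fin d → ℤ), P = {x | ∀ a ∈ A, dot (intCast a) x ≤ 1}

/-- Indicator vector of a subset of `[d]`. -/
def indVec {d : ℕ} (s : Finset (Fin d)) : Fin d → ℝ := fun i => if i ∈ s then 1 else 0

/-- A stable (independent) set of a graph. -/
def IsStableSet {d : ℕ} (G : SimpleGraph (Fin d)) (s : Finset (Fin d)) : Prop :=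
  ∀ i ∈ s, ∀ j ∈ s, ¬ G.Adj i j

/-- The stable set polytope: convex hull of indicator vectors of stable sets. -/
def stableSetPolytope {d : ℕ} (G : SimpleGraph (Fin d)) : Set (Fin d → ℝ) :=
  convexHull ℝ {x | ∃ s : Finset (Fin d), IsStableSet G s ∧ x = indVec s}

/-- The clique number of a graph, as an extended natural number. -/
noncomputable def cliqueNumber {V : Type*} (G : SimpleGraph V) : ℕ∞ :=
  sSup {n : ℕ∞ | ∃ (m : ℕ) (t : Finset V), n = (m : ℕ∞) ∧ G.IsNClique m t}

/-- A graph is perfect if every induced subgraph has clique number equal to its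
chromatic number. -/
def IsPerfect {d : ℕ} (G : SimpleGraph (Fin d)) : Prop :=
  ∀ s : Set (Fin d), cliqueNumber (G.induce s) = (G.induce s).chromaticNumber

open Finset

variable {d : ℕ}

/-- Cliques as finsets. -/
def FClique (G : SimpleGraph (Fin d)) (C : Finset (Fin d)) : Prop :=
  ∀ i ∈ C, ∀ j ∈ C, i ≠ j → G.Adj i j

/-- A decomposition of a weight vector into `N` stable sets. -/
def Decomp (G : SimpleGraph (Fin d)) (z : Fin d → ℕ) (N : ℕ) : Prop :=
  ∃ f : Fin N → Finset (Fin d), (∀ k, IsStableSet G (f k)) ∧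
    ∀ i, (Finset.univ.filter fun k => i ∈ f k).card = z i

open scoped Classical in
/-- Maximum size of a clique contained in `T`. -/
noncomputable def omegaT (G : SimpleGraph (Fin d)) (T : Finset (Fin d)) : ℕ :=
  (T.powerset.filter (FClique G)).sup Finset.card

open scoped Classical in
lemma omegaT_le {G : SimpleGraph (Fin d)} {T C : Finset (Fin d)} (hC : C ⊆ T)
    (hcl : FClique G C) : C.card ≤ omegaT G T :=
  Finset.le_sup (by simp [Finset.mem_filter, Finset.mem_powerset, hC, hcl])

open scoped Classical in
lemma omegaT_attained (G : SimpleGraph (Fin d)) (T : Finset (Fin d)) :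
    ∃ C ⊆ T, FClique G C ∧ C.card = omegaT G T := by
  have hne : (T.powerset.filter (FClique G)).Nonempty := by
    refine ⟨∅, ?_⟩
    simp [Finset.mem_filter, Finset.mem_powerset, FClique]
  obtain ⟨C, hC, hval⟩ := Finset.exists_mem_eq_sup _ hne Finset.card
  simp only [Finset.mem_filter, Finset.mem_powerset] at hC
  exact ⟨C, hC.1, hC.2, hval.symm⟩

lemma clique_inter_stable_card_le {G : SimpleGraph (Fin d)} {C s : Finset (Fin d)}
    (hC : FClique G C) (hs : IsStableSet G s) :
    (C ∩ s).card ≤ 1 := by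
  by_contra h
  push_neg at h
  obtain ⟨i, hi, j, hj, hij⟩ := Finset.one_lt_card.mp h
  simp only [Finset.mem_inter] at hi hj
  exact hs i hi.2 j hj.2 (hC i hi.1 j hj.1 hij)

/-- Key counting identity: `∑_{i∈C} z i = ∑_k |C ∩ f k|` for a decomposition. -/
lemma decomp_sum_clique {z : Fin d → ℕ} {N : ℕ}
    (f : Fin N → Finset (Fin d))
    (hcount : ∀ i, (Finset.univ.filter fun k => i ∈ f k).card = z i)
    (C : Finset (Fin d)) :
    ∑ i ∈ C, z i = ∑ k : Fin N, (C ∩ f k).card := by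
  have : ∀ i, z i = ∑ k : Fin N, if i ∈ f k then 1 else 0 := by
    intro i
    rw [← hcount i, Finset.card_filter]
  calc ∑ i ∈ C, z i = ∑ i ∈ C, ∑ k : Fin N, if i ∈ f k then 1 else 0 := by
        exact Finset.sum_congr rfl fun i _ => this i
    _ = ∑ k : Fin N, ∑ i ∈ C, if i ∈ f k then 1 else 0 := Finset.sum_comm
    _ = ∑ k : Fin N, (C ∩ f k).card := by
        refine Finset.sum_congr rfl fun k _ => ?_
        rw [← Finset.card_filter, Finset.filter_mem_eq_inter]

lemma sum_all_one {N : ℕ} {c : Fin N → ℕ}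
    (hle : ∀ k, c k ≤ 1) (hsum : ∑ k, c k = N) : ∀ k, c k = 1 := by
  intro k
  by_contra hk
  have hlek := hle k
  have hk0 : c k = 0 := by omega
  have h1 : ∑ j, c j ≤ ∑ _j ∈ Finset.univ.erase k, 1 := by
    rw [← Finset.add_sum_erase _ c (Finset.mem_univ k), hk0]
    simpa using Finset.sum_le_sum (fun j (_ : j ∈ Finset.univ.erase k) => hle j)
  have h2 : (Finset.univ.erase k).card = N - 1 := by
    rw [Finset.card_erase_of_mem (Finset.mem_univ k)]
    simp
  rw [Finset.sum_const, h2, smul_eq_mul, mul_one] at h1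
  have h3 : 0 < N := k.pos
  omega

/-- The weighted coloring theorem for perfect-like graphs, proved by induction on
the total weight (this is a weight-level version of Lovász's replication lemma). -/
lemma WCT {G : SimpleGraph (Fin d)}
    (hbase : ∀ (T : Finset (Fin d)) (N : ℕ),
      (∀ C ⊆ T, FClique G C → C.card ≤ N) →
      Decomp G (fun i => if i ∈ T then 1 else 0) N) :
    ∀ (z : Fin d → ℕ) (N : ℕ), (∀ C, FClique G C → ∑ i ∈ C, z i ≤ N) → Decomp G z N := by
  intro z
  generalize hn : (∑ i, z i) = n
  induction n using Nat.strong_induction_on generalizing z with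
  | _ n IH =>
  intro N hcl
  by_cases hsmall : ∀ i, z i ≤ 1
  · -- base case: z is an indicator vector
    classical
    set T : Finset (Fin d) := Finset.univ.filter (fun i => z i = 1) with hT
    have hzT : (fun i => if i ∈ T then 1 else 0) = z := by
      funext i
      have h1 := hsmall i
      by_cases h : z i = 1
      · simp [hT, h]
      · have h0 : z i = 0 := by omega
        simp [hT, h, h0]
    have := hbase T N (fun C hCT hCcl => by
      have : C.card = ∑ i ∈ C, z i := by
        rw [Finset.card_eq_sum_ones]
        refine Finset.sum_congr rfl fun i hi => ?_
        have := hCT hi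
        simp [hT] at this
        omega
      rw [this]
      exact hcl C hCcl)
    rwa [hzT] at this
  · push_neg at hsmall
    obtain ⟨v, hv⟩ := hsmall
    have hv2 : 2 ≤ z v := hv
    classical
    -- N ≥ 2 via the singleton clique {v}
    have hN2 : 2 ≤ N := by
      have hsing : FClique G {v} := by
        intro i hi j hj hij
        rw [Finset.mem_singleton] at hi hj
        exact absurd (hi.trans hj.symm) hij
      have h := hcl {v} hsing
      rw [Finset.sum_singleton] at h
      omega
    -- step 1: reduce weight at v by one
    set z' : Fin d → ℕ := Function.update z v (z v - 1) with hz'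
    have hz'le : ∀ i, z' i ≤ z i := by
      intro i
      by_cases h : i = v
      · subst h; simp [hz']
      · simp [hz', Function.update, h]
    have hz'v : z' v = z v - 1 := by simp [hz']
    have hz'ne : ∀ i, i ≠ v → z' i = z i := by
      intro i h; simp [hz', Function.update, h]
    have hsplit : ∑ i, z i = z v + ∑ i ∈ Finset.univ.erase v, z i :=
      (Finset.add_sum_erase _ z (Finset.mem_univ v)).symm
    have hsum' : ∑ i, z' i = n - 1 := by
      have e1 : ∑ i, z' i = z' v + ∑ i ∈ Finset.univ.erase v, z' i :=
        (Finset.add_sum_erase _ z' (Finset.mem_univ v)).symm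
      have e2 : ∑ i ∈ Finset.univ.erase v, z' i = ∑ i ∈ Finset.univ.erase v, z i :=
        Finset.sum_congr rfl fun i hi => hz'ne i (Finset.ne_of_mem_erase hi)
      rw [e1, e2, hz'v]
      omega
    have hn1 : n - 1 < n := by
      have : 2 ≤ n := by
        calc 2 ≤ z v := hv2
        _ ≤ ∑ i, z i := Finset.single_le_sum (fun i _ => Nat.zero_le _) (Finset.mem_univ v)
        _ = n := hn
      omega
    obtain ⟨f, hstab, hcount⟩ := IH (n - 1) hn1 z' hsum' N
      (fun C hC => le_trans (Finset.sum_le_sum fun i _ => hz'le i) (hcl C hC))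
    -- find a stable set S containing v
    obtain ⟨k₀, hvS⟩ : ∃ k, v ∈ f k := by
      by_contra hcon
      push_neg at hcon
      have h0 := hcount v
      rw [Finset.filter_false_of_mem (fun k _ => hcon k), Finset.card_empty] at h0
      omega
    set S := f k₀ with hS
    have hz'S : ∀ i ∈ S, 1 ≤ z' i := by
      intro i hi
      rw [← hcount i]
      exact Finset.card_pos.mpr ⟨k₀, Finset.mem_filter.mpr ⟨Finset.mem_univ _, hi⟩⟩
    -- step 2: subtract the stable set S minus v
    set z'' : Fin d → ℕ := fun i => z' i - (if i ∈ S.erase v then 1 else 0) with hz''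
    have hz''le : ∀ i, z'' i ≤ z' i := fun i => Nat.sub_le _ _
    have hsum'' : ∑ i, z'' i < n := by
      calc ∑ i, z'' i ≤ ∑ i, z' i := Finset.sum_le_sum fun i _ => hz''le i
      _ = n - 1 := hsum'
      _ < n := hn1
    have hcl'' : ∀ C, FClique G C → ∑ i ∈ C, z'' i ≤ N - 1 := by
      intro C hC
      by_cases hvC : v ∈ C
      · -- v ∈ C : already ∑ z' over C is ≤ N - 1
        have e : ∑ i ∈ C, z' i + 1 = ∑ i ∈ C, z i := by
          rw [← Finset.add_sum_erase C z' hvC, ← Finset.add_sum_erase C z hvC]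
          have e2 : ∑ i ∈ C.erase v, z' i = ∑ i ∈ C.erase v, z i :=
            Finset.sum_congr rfl fun i hi => hz'ne i (Finset.ne_of_mem_erase hi)
          rw [e2, hz'v]
          omega
        have h2 := hcl C hC
        have h3 := Finset.sum_le_sum (fun i (_ : i ∈ C) => hz''le i)
        omega
      · have hm : ∑ i ∈ C, z' i ≤ N := le_trans (Finset.sum_le_sum fun i _ => hz'le i) (hcl C hC)
        by_cases hmN : ∑ i ∈ C, z' i = N
        · -- C is a tight clique: it must meet S in a vertex ≠ v
          have hswap := decomp_sum_clique f hcount C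
          have hone : ∀ k, (C ∩ f k).card = 1 := by
            refine sum_all_one (fun k => clique_inter_stable_card_le hC (hstab k)) ?_
            rw [← hswap]; exact hmN
          obtain ⟨u, hu⟩ := Finset.card_pos.mp (by rw [hone k₀]; omega)
          have huC : u ∈ C := (Finset.mem_inter.mp hu).1
          have huS : u ∈ S := (Finset.mem_inter.mp hu).2
          have huv : u ≠ v := fun h => hvC (h ▸ huC)
          have hz''u : z'' u + 1 ≤ z' u := by
            have h1 := hz'S u huS
            have e : z'' u = z' u - 1 := by
              simp only [hz'']
              rw [if_pos (Finset.mem_erase.mpr ⟨huv, huS⟩)]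
            omega
          have : ∑ i ∈ C, z'' i + 1 ≤ ∑ i ∈ C, z' i := by
            rw [← Finset.add_sum_erase C z'' huC, ← Finset.add_sum_erase C z' huC]
            have := Finset.sum_le_sum (fun i (_ : i ∈ C.erase u) => hz''le i)
            omega
          omega
        · have := Finset.sum_le_sum (fun i (_ : i ∈ C) => hz''le i)
          omega
    -- apply IH to z'' with bound N - 1
    obtain ⟨g, hgstab, hgcount⟩ := IH (∑ i, z'' i) hsum'' z'' rfl (N - 1) hcl''
    -- assemble: add S as the final stable set
    obtain ⟨M, rfl⟩ : ∃ M, N = M + 1 := ⟨N - 1, by omega⟩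
    have hM : M + 1 - 1 = M := rfl
    refine ⟨Fin.snoc (fun k => g (Fin.cast hM.symm k)) S, ?_, ?_⟩
    · intro k
      refine Fin.lastCases ?_ (fun j => ?_) k
      · rw [Fin.snoc_last]; exact hstab k₀
      · rw [Fin.snoc_castSucc]; exact hgstab _
    · intro i
      rw [Finset.card_filter, Fin.sum_univ_castSucc]
      simp only [Fin.snoc_castSucc, Fin.snoc_last]
      have hgc : ∑ k : Fin M, (if i ∈ g (Fin.cast hM.symm k) then 1 else 0) = z'' i := by
        rw [← hgcount i, Finset.card_filter]
        exact Fintype.sum_equiv (finCongr hM.symm) _ _ (fun k => rfl)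
      rw [hgc]
      have hz''i : z'' i = z' i - (if i ∈ S.erase v then 1 else 0) := by simp only [hz'']
      by_cases hiv : i = v
      · subst hiv
        rw [if_pos hvS]
        have e1 : i ∉ S.erase i := fun h => (Finset.mem_erase.mp h).1 rfl
        rw [if_neg e1] at hz''i
        omega
      · by_cases hiS : i ∈ S
        · rw [if_pos hiS]
          rw [if_pos (Finset.mem_erase.mpr ⟨hiv, hiS⟩)] at hz''i
          have h1 := hz'S i hiS
          have h2 := hz'ne i hiv
          omega
        · rw [if_neg hiS]
          rw [if_neg (fun h => hiS (Finset.mem_of_mem_erase h))] at hz''i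
          have h2 := hz'ne i hiv
          omega

/-! ### Bridges between `FClique`/`Decomp` and `cliqueNumber`/`chromaticNumber`. -/

lemma fclique_image {G : SimpleGraph (Fin d)} {s : Set (Fin d)} {t : Finset ↥s}
    (h : (G.induce s).IsClique ↑t) : FClique G (t.image Subtype.val) := by
  intro i hi j hj hij
  rw [Finset.mem_image] at hi hj
  obtain ⟨a, ha, rfl⟩ := hi
  obtain ⟨b, hb, rfl⟩ := hj
  have hab : a ≠ b := fun e => hij (by rw [e])
  have := h (Finset.mem_coe.mpr ha) (Finset.mem_coe.mpr hb) hab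
  simpa using this

lemma fclique_lift {G : SimpleGraph (Fin d)} {s : Set (Fin d)} {C : Finset (Fin d)}
    (hsub : ∀ i ∈ C, i ∈ s) (hcl : FClique G C) :
    ∃ t : Finset ↥s, (G.induce s).IsNClique C.card t := by
  classical
  refine ⟨C.attach.map ⟨fun x => (⟨x.1, hsub x.1 x.2⟩ : ↥s), ?_⟩, ?_, ?_⟩
  · intro x y hxy
    apply Subtype.ext
    have h := congrArg Subtype.val hxy
    simpa using h
  · intro a ha b hb hab
    simp only [Finset.coe_map, Set.mem_image, Finset.mem_coe, Finset.mem_attach,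
      Function.Embedding.coeFn_mk, true_and] at ha hb
    obtain ⟨x, _, rfl⟩ := ha
    obtain ⟨y, _, rfl⟩ := hb
    have hxy : x.1 ≠ y.1 := fun e => hab (Subtype.ext e)
    exact hcl x.1 x.2 y.1 y.2 hxy
  · rw [Finset.card_map, Finset.card_attach]

lemma cliqueNumber_induce_eq (G : SimpleGraph (Fin d)) (s : Set (Fin d)) :
    cliqueNumber (G.induce s) = (omegaT G s.toFinite.toFinset : ℕ∞) := by
  apply le_antisymm
  · apply sSup_le
    rintro n ⟨m, t, rfl, ht⟩
    rw [Nat.cast_le]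
    have h1 : FClique G (t.image Subtype.val) := fclique_image ht.1
    have h2 : t.image Subtype.val ⊆ s.toFinite.toFinset := by
      intro i hi
      rw [Finset.mem_image] at hi
      obtain ⟨a, _, rfl⟩ := hi
      rw [Set.Finite.mem_toFinset]
      exact a.2
    have h3 : (t.image Subtype.val).card = m := by
      rw [Finset.card_image_of_injective _ Subtype.val_injective, ht.2]
    rw [← h3]
    exact omegaT_le h2 h1
  · obtain ⟨C, hC, hcl, hcard⟩ := omegaT_attained G s.toFinite.toFinset
    obtain ⟨t, ht⟩ := fclique_lift (fun i hi => (Set.Finite.mem_toFinset _).mp (hC hi)) hcl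
    apply le_sSup
    exact ⟨omegaT G s.toFinite.toFinset, t, rfl, hcard ▸ ht⟩

lemma cliqueNumber_le_chromaticNumber {V : Type*} (G' : SimpleGraph V) :
    cliqueNumber G' ≤ G'.chromaticNumber := by
  apply sSup_le
  rintro n ⟨m, t, rfl, ht⟩
  have := ht.1.card_le_chromaticNumber
  rwa [ht.2] at this

/-- From a decomposition of the indicator of `T` into `N` stable sets, the induced graph
on `T` is `N`-colorable. -/
lemma colorable_of_decomp {G : SimpleGraph (Fin d)} {T : Finset (Fin d)} {N : ℕ}
    (h : Decomp G (fun i => if i ∈ T then 1 else 0) N) :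
    (G.induce (↑T : Set (Fin d))).Colorable N := by
  classical
  obtain ⟨f, hstab, hcount⟩ := h
  have hex : ∀ v : ↥(↑T : Set (Fin d)), ∃ k, v.1 ∈ f k := by
    intro v
    have h1 : (Finset.univ.filter fun k => v.1 ∈ f k).card
        = if v.1 ∈ T then 1 else 0 := hcount v.1
    rw [if_pos (by exact_mod_cast v.2)] at h1
    have h2 : (Finset.univ.filter fun k => v.1 ∈ f k).Nonempty :=
      Finset.card_pos.mp (by omega)
    obtain ⟨k, hk⟩ := h2
    exact ⟨k, (Finset.mem_filter.mp hk).2⟩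
  choose c hc using hex
  refine ⟨SimpleGraph.Coloring.mk c ?_⟩
  intro v w hadj hcw
  have : G.Adj v.1 w.1 := by simpa using hadj
  exact hstab (c v) v.1 (hc v) w.1 (hcw ▸ hc w) this

/-- Conversely, a coloring yields a decomposition of the indicator of `T`. -/
lemma decomp_of_colorable {G : SimpleGraph (Fin d)} {T : Finset (Fin d)} {N : ℕ}
    (h : (G.induce (↑T : Set (Fin d))).Colorable N) :
    Decomp G (fun i => if i ∈ T then 1 else 0) N := by
  classical
  obtain ⟨col⟩ := h
  refine ⟨fun k => T.filter (fun i => ∃ h : i ∈ T, col ⟨i, h⟩ = k), ?_, ?_⟩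
  · intro k i hi j hj
    simp only [Finset.mem_filter] at hi hj
    obtain ⟨hiT, hi2, hik⟩ := hi
    obtain ⟨hjT, hj2, hjk⟩ := hj
    intro hadj
    have hadj' : (G.induce (↑T : Set (Fin d))).Adj ⟨i, hi2⟩ ⟨j, hj2⟩ := by simpa using hadj
    exact col.valid hadj' (by rw [hik, hjk])
  · intro i
    show (Finset.univ.filter fun k =>
      i ∈ T.filter (fun i' => ∃ h : i' ∈ T, col ⟨i', h⟩ = k)).card = if i ∈ T then 1 else 0
    by_cases hiT : i ∈ T
    · rw [if_pos hiT, Finset.card_eq_one]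
      refine ⟨col ⟨i, hiT⟩, ?_⟩
      ext k
      simp only [Finset.mem_filter, Finset.mem_univ, true_and, Finset.mem_singleton]
      constructor
      · rintro ⟨_, _, rfl⟩; rfl
      · rintro rfl; exact ⟨hiT, hiT, rfl⟩
    · rw [if_neg hiT, Finset.card_eq_zero]
      apply Finset.filter_false_of_mem
      intro k _
      simp only [Finset.mem_filter]
      rintro ⟨hT, _, _⟩
      exact hiT hT

/-- From perfection in the given sense, the base case needed for `WCT`. -/
lemma base_of_perfect {G : SimpleGraph (Fin d)} (hperf : IsPerfect G) :
    ∀ (T : Finset (Fin d)) (N : ℕ),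
      (∀ C ⊆ T, FClique G C → C.card ≤ N) →
      Decomp G (fun i => if i ∈ T then 1 else 0) N := by
  intro T N hcl
  have hom : omegaT G ((↑T : Set (Fin d)).toFinite.toFinset) ≤ N := by
    obtain ⟨C, hC, hcl', hcard⟩ := omegaT_attained G (↑T : Set (Fin d)).toFinite.toFinset
    rw [← hcard]
    refine hcl C ?_ hcl'
    intro i hi
    have := hC hi
    rw [Set.Finite.mem_toFinset] at this
    exact_mod_cast this
  have hcn := hperf (↑T : Set (Fin d))
  rw [cliqueNumber_induce_eq] at hcn
  have hchrom : (G.induce (↑T : Set (Fin d))).chromaticNumber ≤ (N : ℕ∞) := by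
    rw [← hcn]
    exact_mod_cast hom
  exact decomp_of_colorable ((SimpleGraph.chromaticNumber_le_iff_colorable).mp hchrom)

/-! ### Geometric toolkit -/

lemma dot_isLinearMap (a : Fin d → ℝ) : IsLinearMap ℝ (dot a) := by
  constructor
  · intro x y
    simp [dot, mul_add, Finset.sum_add_distrib]
  · intro c x
    simp only [dot, Pi.smul_apply, smul_eq_mul, Finset.mul_sum]
    exact Finset.sum_congr rfl fun i _ => by ring

lemma convex_dot_halfspace (a : Fin d → ℝ) (c : ℝ) : Convex ℝ {x : Fin d → ℝ | dot a x ≤ c} :=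
  convex_halfSpace_le (dot_isLinearMap a) c

lemma dot_le_on_hull {S : Set (Fin d → ℝ)} {a : Fin d → ℝ} {c : ℝ}
    (hS : ∀ y ∈ S, dot a y ≤ c) {x : Fin d → ℝ} (hx : x ∈ convexHull ℝ S) : dot a x ≤ c :=
  convexHull_min hS (convex_dot_halfspace a c) hx

lemma mem_orthant_of_hull {S : Set (Fin d → ℝ)} (hS : ∀ y ∈ S, y ∈ nonnegOrthant d)
    {x : Fin d → ℝ} (hx : x ∈ convexHull ℝ S) : x ∈ nonnegOrthant d := by
  have hconv : Convex ℝ (nonnegOrthant d) := by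
    intro u hu v hv s t hs ht hst i
    have := hu i
    have := hv i
    have : 0 + 0 ≤ s * u i + t * v i :=
      add_le_add (mul_nonneg hs (hu i)) (mul_nonneg ht (hv i))
    simpa using this
  exact convexHull_min hS hconv hx

lemma dot_indVec_left (C : Finset (Fin d)) (y : Fin d → ℝ) :
    dot (indVec C) y = ∑ i ∈ C, y i := by
  rw [dot, ← Finset.sum_filter_add_sum_filter_not Finset.univ (· ∈ C)]
  have h1 : ∀ i ∈ Finset.univ.filter (· ∈ C), indVec C i * y i = y i := by
    intro i hi
    rw [Finset.mem_filter] at hi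
    simp [indVec, hi.2]
  have h2 : ∀ i ∈ Finset.univ.filter (¬ · ∈ C), indVec C i * y i = 0 := by
    intro i hi
    rw [Finset.mem_filter] at hi
    simp [indVec, hi.2]
  rw [Finset.sum_congr rfl h1, Finset.sum_congr rfl h2, Finset.sum_const_zero, add_zero]
  congr 1
  ext i
  simp

/-- sign vector canonically attached to `p` -/
noncomputable def sgnV (p : Fin d → ℝ) : Fin d → ℝ := fun i => if 0 ≤ p i then 1 else -1

lemma sgnV_isSignVec (p : Fin d → ℝ) : IsSignVec (sgnV p) := by
  intro i
  by_cases h : 0 ≤ p i <;> simp [sgnV, h]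

lemma sflip_sgnV (p : Fin d → ℝ) : sflip (sgnV p) p = absVec p := by
  funext i
  by_cases h : 0 ≤ p i
  · simp [sflip, sgnV, h, absVec, abs_of_nonneg h]
  · push_neg at h
    simp [sflip, sgnV, not_le.mpr h, absVec, abs_of_neg h]

lemma sflip_sgnV_abs (p : Fin d → ℝ) : sflip (sgnV p) (absVec p) = p := by
  funext i
  by_cases h : 0 ≤ p i
  · simp [sflip, sgnV, h, absVec, abs_of_nonneg h]
  · push_neg at h
    simp [sflip, sgnV, not_le.mpr h, absVec, abs_of_neg h]

lemma mem_iff_abs_mem {P : Set (Fin d → ℝ)} (huncond : Unconditional P) (p : Fin d → ℝ) :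
    p ∈ P ↔ absVec p ∈ P := by
  constructor
  · intro hp
    rw [← sflip_sgnV p]
    exact huncond _ (sgnV_isSignVec p) p hp
  · intro hp
    rw [← sflip_sgnV_abs p]
    exact huncond _ (sgnV_isSignVec p) _ hp

lemma stableGen_finite (G : SimpleGraph (Fin d)) :
    {x : Fin d → ℝ | ∃ s : Finset (Fin d), IsStableSet G s ∧ x = indVec s}.Finite := by
  apply Set.Finite.subset (Set.finite_range (indVec (d := d)))
  rintro x ⟨s, _, rfl⟩
  exact ⟨s, rfl⟩

lemma stab_closed (G : SimpleGraph (Fin d)) : IsClosed (stableSetPolytope G) :=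
  (stableGen_finite G).isClosed_convexHull ℝ

lemma stab_orthant {G : SimpleGraph (Fin d)} {y : Fin d → ℝ} (hy : y ∈ stableSetPolytope G) :
    ∀ i, 0 ≤ y i := by
  have := mem_orthant_of_hull (S := {x | ∃ s, IsStableSet G s ∧ x = indVec s}) ?_ hy
  · exact this
  · rintro x ⟨s, _, rfl⟩ i
    by_cases h : i ∈ s <;> simp [indVec, h]

lemma stab_clique_ineq {G : SimpleGraph (Fin d)} {y : Fin d → ℝ} (hy : y ∈ stableSetPolytope G)
    {C : Finset (Fin d)} (hC : FClique G C) : ∑ i ∈ C, y i ≤ 1 := by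
  rw [← dot_indVec_left]
  refine dot_le_on_hull ?_ hy
  rintro x ⟨s, hs, rfl⟩
  rw [dot_indVec_left]
  classical
  have : ∑ i ∈ C, indVec s i = ((C ∩ s).card : ℝ) := by
    rw [← Finset.sum_filter_add_sum_filter_not C (· ∈ s)]
    have h1 : ∀ i ∈ C.filter (· ∈ s), indVec s i = 1 := by
      intro i hi; rw [Finset.mem_filter] at hi; simp [indVec, hi.2]
    have h2 : ∀ i ∈ C.filter (¬ · ∈ s), indVec s i = (0 : ℝ) := by
      intro i hi; rw [Finset.mem_filter] at hi; simp [indVec, hi.2]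
    rw [Finset.sum_congr rfl h1, Finset.sum_congr rfl h2, Finset.sum_const, Finset.sum_const,
      Finset.filter_mem_eq_inter]
    simp
  rw [this]
  have := clique_inter_stable_card_le hC hs
  exact_mod_cast this

/-! ### QSTAB ⊆ STAB for perfect graphs -/

lemma rat_qstab_mem_stab {G : SimpleGraph (Fin d)} (hperf : IsPerfect G) (q : Fin d → ℚ)
    (h0 : ∀ i, 0 ≤ q i) (hcl : ∀ C, FClique G C → ∑ i ∈ C, q i ≤ 1) :
    (fun i => (q i : ℝ)) ∈ stableSetPolytope G := by
  classical
  set N : ℕ := ∏ i, (q i).den with hN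
  have hNpos : 0 < N := Finset.prod_pos fun i _ => (q i).pos
  have hint : ∀ i, ∃ zi : ℕ, (zi : ℚ) = q i * N := by
    intro i
    obtain ⟨c, hc⟩ : (q i).den ∣ N := Finset.dvd_prod_of_mem (fun j => (q j).den) (Finset.mem_univ i)
    have hden : ((q i).den : ℚ) ≠ 0 := by
      exact_mod_cast (q i).pos.ne'
    have h1 : q i * ((q i).den : ℚ) = ((q i).num : ℚ) := by
      nth_rewrite 1 [← Rat.num_div_den (q i)]
      rw [div_mul_cancel₀ _ hden]
    have hnum : 0 ≤ (q i).num := Rat.num_nonneg.mpr (h0 i)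
    refine ⟨(q i).num.toNat * c, ?_⟩
    have h2 : (((q i).num.toNat : ℕ) : ℚ) = ((q i).num : ℚ) := by
      exact_mod_cast congrArg (Int.cast : ℤ → ℚ) (Int.toNat_of_nonneg hnum)
    push_cast
    rw [h2, ← h1, hc]
    push_cast
    ring
  choose z hz using hint
  have hclz : ∀ C, FClique G C → ∑ i ∈ C, z i ≤ N := by
    intro C hC
    have hq : (∑ i ∈ C, (z i : ℚ)) ≤ (N : ℚ) := by
      calc ∑ i ∈ C, (z i : ℚ) = ∑ i ∈ C, q i * N := Finset.sum_congr rfl fun i _ => hz i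
      _ = (∑ i ∈ C, q i) * N := by rw [Finset.sum_mul]
      _ ≤ 1 * N := by
          apply mul_le_mul_of_nonneg_right (hcl C hC)
          exact_mod_cast Nat.zero_le N
      _ = N := one_mul _
    exact_mod_cast hq
  obtain ⟨f, hstab, hcount⟩ := WCT (base_of_perfect hperf) z N hclz
  apply mem_convexHull_of_exists_fintype (ι := Fin N) (fun _ => (N : ℝ)⁻¹)
    (fun k => indVec (f k))
  · intro k
    positivity
  · rw [Finset.sum_const, Finset.card_univ, Fintype.card_fin, nsmul_eq_mul]
    field_simp
  · intro k
    exact ⟨f k, hstab k, rfl⟩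
  · funext i
    have hzi : (z i : ℝ) = (q i : ℝ) * N := by exact_mod_cast congrArg (Rat.cast : ℚ → ℝ) (hz i)
    have hsum : (∑ k : Fin N, (N:ℝ)⁻¹ • indVec (f k)) i
        = (N:ℝ)⁻¹ * ∑ k : Fin N, (if i ∈ f k then (1:ℝ) else 0) := by
      rw [Finset.sum_apply]
      rw [Finset.mul_sum]
      refine Finset.sum_congr rfl fun k _ => ?_
      simp [indVec]
    rw [hsum, Finset.sum_boole]
    have : (Finset.univ.filter fun k => i ∈ f k).card = z i := hcount i
    rw [this]
    rw [hzi]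
    have hNne : (N : ℝ) ≠ 0 := by positivity
    field_simp
  
lemma qstab_subset_stab {G : SimpleGraph (Fin d)} (hperf : IsPerfect G) (y : Fin d → ℝ)
    (h0 : ∀ i, 0 ≤ y i) (hcl : ∀ C, FClique G C → ∑ i ∈ C, y i ≤ 1) :
    y ∈ stableSetPolytope G := by
  have hy1 : ∀ i, y i ≤ 1 := by
    intro i
    have hsing : FClique G {i} := by
      intro a ha b hb hab
      rw [Finset.mem_singleton] at ha hb
      exact absurd (ha.trans hb.symm) hab
    have := hcl {i} hsing
    rwa [Finset.sum_singleton] at this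
  have hclosed := stab_closed G
  rw [← hclosed.closure_eq]
  rw [Metric.mem_closure_iff]
  intro ε hε
  have hmin : (0:ℝ) < min 1 (ε/2) := by
    apply lt_min one_pos
    linarith
  obtain ⟨θ, hθ0, hθm⟩ := exists_rat_btwn hmin
  have hθ1 : (θ : ℝ) < 1 := lt_of_lt_of_le hθm (min_le_left _ _)
  have hθε : (θ : ℝ) < ε / 2 := lt_of_lt_of_le hθm (min_le_right _ _)
  have hθpos : (0:ℝ) < θ := hθ0
  have hstep : (0:ℝ) < (θ : ℝ) / (d + 1) := by positivity
  have hchoice : ∀ i, ∃ r : ℚ, ((1:ℝ) - θ) * y i < r ∧ (r:ℝ) < (1 - θ) * y i + θ/(d+1) := by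
    intro i
    exact exists_rat_btwn (by linarith)
  choose q hql hqr using hchoice
  have hq0 : ∀ i, 0 ≤ q i := by
    intro i
    have h1 : (0:ℝ) ≤ (1 - θ) * y i := mul_nonneg (by linarith) (h0 i)
    have := lt_of_le_of_lt h1 (hql i)
    exact_mod_cast this.le
  have hqcl : ∀ C, FClique G C → ∑ i ∈ C, q i ≤ 1 := by
    intro C hC
    have hR : (∑ i ∈ C, (q i : ℝ)) ≤ 1 := by
      have h1 : ∑ i ∈ C, (q i : ℝ) ≤ ∑ i ∈ C, ((1 - θ) * y i + θ/(d+1)) :=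
        Finset.sum_le_sum fun i _ => (hqr i).le
      have h2 : ∑ i ∈ C, ((1 - θ) * y i + θ/(d+1))
          = (1 - θ) * (∑ i ∈ C, y i) + C.card * (θ/(d+1)) := by
        rw [Finset.sum_add_distrib, Finset.sum_const, ← Finset.mul_sum, nsmul_eq_mul]
      have h3 : (1 - θ) * (∑ i ∈ C, y i) ≤ (1 - θ) * 1 :=
        mul_le_mul_of_nonneg_left (hcl C hC) (by linarith)
      have h4 : (C.card : ℝ) ≤ d := by
        have h := Finset.card_le_univ C
        rw [Fintype.card_fin] at h
        exact_mod_cast h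
      have h5 : (C.card : ℝ) * (θ/(d+1)) ≤ d * (θ/(d+1)) :=
        mul_le_mul_of_nonneg_right h4 hstep.le
      have h6 : (d:ℝ) * (θ/(d+1)) ≤ θ := by
        rw [mul_div_assoc']
        rw [div_le_iff₀ (by positivity)]
        nlinarith [hθpos]
      linarith
    exact_mod_cast hR
  refine ⟨fun i => (q i : ℝ), rat_qstab_mem_stab hperf q hq0 hqcl, ?_⟩
  rw [dist_pi_lt_iff hε]
  intro i
  rw [Real.dist_eq, abs_sub_lt_iff]
  have hql' := hql i
  have hqr' := hqr i
  have ht1 : (θ:ℝ) * y i ≤ θ := mul_le_of_le_one_right hθpos.le (hy1 i)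
  have ht0 : (0:ℝ) ≤ (θ:ℝ) * y i := mul_nonneg hθpos.le (h0 i)
  have hd1 : (θ:ℝ)/(d+1) ≤ θ := by
    rw [div_le_iff₀ (by positivity)]
    nlinarith [hθpos]
  constructor
  · nlinarith
  · nlinarith

/-! ### The reverse direction: `P = UPoly (stableSetPolytope G)` with `G` perfect is reflexive -/

lemma mem_UPoly_iff {S : Set (Fin d → ℝ)} {x : Fin d → ℝ} : x ∈ UPoly S ↔ absVec x ∈ S :=
  Iff.rfl

open scoped Classical in
/-- the finset of signed clique indicator vectors -/
noncomputable def signedCliques (G : SimpleGraph (Fin d)) : Finset (Fin d → ℤ) :=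
  (Finset.univ.image (fun f : Fin d → Fin 3 => fun i => ((f i : ℤ) - 1))).filter
    (fun a => FClique G (Finset.univ.filter (fun i => a i ≠ 0)))

open scoped Classical in
lemma mem_signedCliques {G : SimpleGraph (Fin d)} {a : Fin d → ℤ} :
    a ∈ signedCliques G ↔
      (∀ i, a i = -1 ∨ a i = 0 ∨ a i = 1) ∧
        FClique G (Finset.univ.filter (fun i => a i ≠ 0)) := by
  unfold signedCliques
  rw [Finset.mem_filter]
  constructor
  · rintro ⟨hmem, hcl⟩
    refine ⟨?_, hcl⟩
    rw [Finset.mem_image] at hmem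
    obtain ⟨f, _, rfl⟩ := hmem
    intro i
    have h3 : ((f i : ℕ)) < 3 := (f i).isLt
    dsimp only
    omega
  · rintro ⟨hrange, hcl⟩
    refine ⟨?_, hcl⟩
    rw [Finset.mem_image]
    refine ⟨fun i => if a i = -1 then 0 else if a i = 0 then 1 else 2, Finset.mem_univ _, ?_⟩
    funext i
    rcases hrange i with h | h | h <;> simp [h]

lemma reverse_direction {G : SimpleGraph (Fin d)} (hperf : IsPerfect G)
    {P : Set (Fin d → ℝ)} (hPU : P = UPoly (stableSetPolytope G))
    (h0 : 0 ∈ interior P) : IsReflexive P := by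
  classical
  refine ⟨h0, signedCliques G, ?_⟩
  ext x
  constructor
  · -- P ⊆ halfspaces
    intro hx
    intro a ha
    rw [mem_signedCliques] at ha
    obtain ⟨hrange, hcl⟩ := ha
    have habs : absVec x ∈ stableSetPolytope G := by
      rw [hPU] at hx
      exact hx
    have hstep : ∀ i, intCast a i * x i ≤
        (if a i ≠ 0 then absVec x i else 0) := by
      intro i
      rcases hrange i with h | h | h
      · have : intCast a i = -1 := by simp [intCast, h]
        rw [this]
        simp only [h, ne_eq, neg_eq_zero, one_ne_zero, not_false_eq_true, if_pos]
        calc (-1) * x i ≤ |x i| := by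
              rw [neg_mul, one_mul]
              exact neg_le_abs (x i)
        _ = absVec x i := rfl
      · have : intCast a i = 0 := by simp [intCast, h]
        rw [this]
        simp [h]
      · have : intCast a i = 1 := by simp [intCast, h]
        rw [this]
        simp only [h, ne_eq, one_ne_zero, not_false_eq_true, if_pos]
        calc 1 * x i = x i := one_mul _
        _ ≤ |x i| := le_abs_self (x i)
        _ = absVec x i := rfl
    calc dot (intCast a) x = ∑ i, intCast a i * x i := rfl
      _ ≤ ∑ i, (if a i ≠ 0 then absVec x i else 0) :=
          Finset.sum_le_sum fun i _ => hstep i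
      _ = ∑ i ∈ Finset.univ.filter (fun i => a i ≠ 0), absVec x i := by
          rw [Finset.sum_filter]
      _ ≤ 1 := stab_clique_ineq habs hcl
  · -- halfspaces ⊆ P
    intro hx
    rw [hPU, mem_UPoly_iff]
    apply qstab_subset_stab hperf
    · intro i
      exact abs_nonneg (x i)
    · intro C hC
      set a : Fin d → ℤ := fun i => if i ∈ C then (if 0 ≤ x i then 1 else -1) else 0 with ha
      have haC : a ∈ signedCliques G := by
        rw [mem_signedCliques]
        constructor
        · intro i
          by_cases h1 : i ∈ C <;> by_cases h2 : 0 ≤ x i <;> simp [ha, h1, h2]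
        · have hsupp : Finset.univ.filter (fun i => a i ≠ 0) = C := by
            ext i
            simp only [Finset.mem_filter, Finset.mem_univ, true_and]
            by_cases h1 : i ∈ C
            · by_cases h2 : 0 ≤ x i <;> simp [ha, h1, h2]
            · simp [ha, h1]
          rw [hsupp]
          exact hC
      have := hx a haC
      have hdot : dot (intCast a) x = ∑ i ∈ C, absVec x i := by
        rw [dot]
        rw [← Finset.sum_filter_add_sum_filter_not Finset.univ (· ∈ C)]
        have e1 : ∀ i ∈ Finset.univ.filter (· ∈ C), intCast a i * x i = absVec x i := by
          intro i hi
          rw [Finset.mem_filter] at hi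
          by_cases h2 : 0 ≤ x i
          · have : intCast a i = 1 := by simp [intCast, ha, hi.2, h2]
            rw [this, one_mul]
            exact (abs_of_nonneg h2).symm
          · push_neg at h2
            have : intCast a i = -1 := by simp [intCast, ha, hi.2, not_le.mpr h2]
            rw [this]
            have : absVec x i = -(x i) := abs_of_neg h2
            rw [this]
            ring
        have e2 : ∀ i ∈ Finset.univ.filter (¬ · ∈ C), intCast a i * x i = 0 := by
          intro i hi
          rw [Finset.mem_filter] at hi
          have : intCast a i = 0 := by simp [intCast, ha, hi.2]
          rw [this, zero_mul]
        rw [Finset.sum_congr rfl e1, Finset.sum_congr rfl e2, Finset.sum_const_zero, add_zero]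
        congr 1
        ext i
        simp
      rw [hdot] at this
      exact this

/-! ### Down-closedness of the stable set polytope; padding decompositions -/

lemma stab_gen_mem {G : SimpleGraph (Fin d)} {s : Finset (Fin d)} (hs : IsStableSet G s) :
    indVec s ∈ stableSetPolytope G :=
  subset_convexHull ℝ _ ⟨s, hs, rfl⟩

lemma stab_coords {G : SimpleGraph (Fin d)} {y : Fin d → ℝ} (hy : y ∈ stableSetPolytope G) :
    ∃ (ι : Type) (_ : Fintype ι) (w : ι → ℝ) (s : ι → Finset (Fin d)),
      (∀ k, 0 ≤ w k) ∧ ∑ k, w k = 1 ∧ (∀ k, IsStableSet G (s k)) ∧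
        ∀ j, y j = ∑ k, w k * indVec (s k) j := by
  rw [stableSetPolytope, mem_convexHull_iff_exists_fintype] at hy
  obtain ⟨ι, hfin, w, zf, hw0, hw1, hzf, hsum⟩ := hy
  choose s hs hz using hzf
  refine ⟨ι, hfin, w, s, hw0, hw1, hs, ?_⟩
  intro j
  have := congrFun hsum j
  rw [← this, Finset.sum_apply]
  refine Finset.sum_congr rfl fun k _ => ?_
  rw [hz k]
  simp

lemma stab_scale_coord {G : SimpleGraph (Fin d)} {y : Fin d → ℝ}
    (hy : y ∈ stableSetPolytope G) (i : Fin d) {c : ℝ} (hc0 : 0 ≤ c) (hc1 : c ≤ 1) :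
    Function.update y i (c * y i) ∈ stableSetPolytope G := by
  classical
  obtain ⟨ι, hfin, w, s, hw0, hw1, hs, hcoord⟩ := stab_coords hy
  apply mem_convexHull_of_exists_fintype (ι := ι ⊕ ι)
    (Sum.elim (fun k => c * w k) (fun k => (1 - c) * w k))
    (Sum.elim (fun k => indVec (s k)) (fun k => indVec ((s k).erase i)))
  · intro k
    rcases k with k | k
    · exact mul_nonneg hc0 (hw0 k)
    · exact mul_nonneg (by linarith) (hw0 k)
  · rw [Fintype.sum_sum_type]
    simp only [Sum.elim_inl, Sum.elim_inr]
    rw [← Finset.mul_sum, ← Finset.mul_sum, hw1]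
    ring
  · intro k
    rcases k with k | k
    · exact ⟨s k, hs k, rfl⟩
    · refine ⟨(s k).erase i, ?_, rfl⟩
      intro a ha b hb
      exact hs k a (Finset.mem_of_mem_erase ha) b (Finset.mem_of_mem_erase hb)
  · funext j
    rw [Finset.sum_apply, Fintype.sum_sum_type]
    simp only [Sum.elim_inl, Sum.elim_inr, Pi.smul_apply, smul_eq_mul]
    by_cases hji : j = i
    · subst hji
      have h2 : ∀ k, indVec ((s k).erase j) j = 0 := by
        intro k
        simp [indVec]
      have h1 : Function.update y j (c * y j) j = c * y j := Function.update_self _ _ _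
      rw [h1]
      have : ∀ k, (1 - c) * w k * indVec ((s k).erase j) j = 0 := by
        intro k; rw [h2 k]; ring
      rw [Finset.sum_congr rfl (fun k _ => this k), Finset.sum_const_zero, add_zero]
      rw [hcoord j, Finset.mul_sum]
      exact Finset.sum_congr rfl fun k _ => by ring
    · have h1 : Function.update y i (c * y i) j = y j := Function.update_of_ne hji _ _
      rw [h1]
      have h2 : ∀ k, indVec ((s k).erase i) j = indVec (s k) j := by
        intro k
        by_cases hj : j ∈ s k
        · have : j ∈ (s k).erase i := Finset.mem_erase.mpr ⟨hji, hj⟩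
          simp [indVec, hj, this]
        · have : j ∉ (s k).erase i := fun h => hj (Finset.mem_of_mem_erase h)
          simp [indVec, hj, this]
      rw [hcoord j]
      rw [← Finset.sum_add_distrib]
      refine Finset.sum_congr rfl fun k _ => ?_
      rw [h2 k]
      ring

lemma stab_downclosed {G : SimpleGraph (Fin d)} {x y : Fin d → ℝ}
    (hy : y ∈ stableSetPolytope G) (hx0 : ∀ i, 0 ≤ x i) (hxy : ∀ i, x i ≤ y i) :
    x ∈ stableSetPolytope G := by
  classical
  have key : ∀ U : Finset (Fin d),
      (fun j => if j ∈ U then x j else y j) ∈ stableSetPolytope G := by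
    intro U
    induction U using Finset.induction with
    | empty => simpa using hy
    | @insert i U hnot ih =>
        have hyy : (0:ℝ) ≤ y i := le_trans (hx0 i) (hxy i)
        set c : ℝ := if y i = 0 then 0 else x i / y i with hc
        have hc0 : 0 ≤ c := by
          rw [hc]
          by_cases h : y i = 0
          · simp [h]
          · simp only [h, if_neg, if_false]
            exact div_nonneg (hx0 i) hyy
        have hc1 : c ≤ 1 := by
          rw [hc]
          by_cases h : y i = 0
          · simp [h]
          · simp only [h, if_neg, if_false]
            rw [div_le_one (lt_of_le_of_ne hyy (Ne.symm h))]
            exact hxy i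
        have hcx : c * y i = x i := by
          rw [hc]
          by_cases h : y i = 0
          · simp [h]
            have := hx0 i
            have := hxy i
            rw [h] at this
            linarith
          · rw [if_neg h]
            field_simp
        have := stab_scale_coord ih i hc0 hc1
        have heq : Function.update (fun j => if j ∈ U then x j else y j) i
            (c * (fun j => if j ∈ U then x j else y j) i)
            = (fun j => if j ∈ insert i U then x j else y j) := by
          funext j
          by_cases hji : j = i
          · subst hji
            rw [Function.update_self]
            have hb : (fun j' => if j' ∈ U then x j' else y j') j = y j := by
              simp [hnot]
            rw [hb, if_pos (Finset.mem_insert_self _ _), hcx]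
          · rw [Function.update_of_ne hji]
            have : j ∈ insert i U ↔ j ∈ U := by
              rw [Finset.mem_insert]
              exact ⟨fun h => h.resolve_left hji, Or.inr⟩
            by_cases hj : j ∈ U
            · rw [if_pos hj, if_pos (this.mpr hj)]
            · rw [if_neg hj, if_neg (fun h => hj (this.mp h))]
        rw [heq] at this
        exact this
  have := key Finset.univ
  simpa using this

lemma decomp_mono {G : SimpleGraph (Fin d)} {z : Fin d → ℕ} {N M : ℕ}
    (h : Decomp G z N) (hNM : N ≤ M) : Decomp G z M := by
  induction M, hNM using Nat.le_induction with
  | base => exact h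
  | succ M hM ih =>
      obtain ⟨f, hstab, hcount⟩ := ih
      refine ⟨Fin.snoc f ∅, ?_, ?_⟩
      · intro k
        refine Fin.lastCases ?_ (fun j => ?_) k
        · rw [Fin.snoc_last]
          intro a ha
          simp at ha
        · rw [Fin.snoc_castSucc]
          exact hstab j
      · intro i
        rw [Finset.card_filter, Fin.sum_univ_castSucc]
        simp only [Fin.snoc_castSucc, Fin.snoc_last]
        have h1 : ∑ k : Fin M, (if i ∈ f k then 1 else 0) = z i := by
          rw [← Finset.card_filter]
          exact hcount i
        simp [h1]

/-! ### Forward direction: geometric consequences of reflexivity -/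

lemma dot_single (a : Fin d → ℤ) (i : Fin d) (t : ℝ) :
    dot (intCast a) (fun j => if j = i then t else 0) = (a i : ℝ) * t := by
  rw [dot]
  rw [Finset.sum_eq_single i]
  · simp [intCast]
  · intro j _ hji
    simp [hji]
  · intro h
    exact absurd (Finset.mem_univ i) h

lemma dot_intCast_indVec (a : Fin d → ℤ) (s : Finset (Fin d)) :
    dot (intCast a) (indVec s) = ((∑ i ∈ s, a i : ℤ) : ℝ) := by
  rw [dot]
  rw [← Finset.sum_filter_add_sum_filter_not Finset.univ (· ∈ s)]
  have h1 : ∀ i ∈ Finset.univ.filter (· ∈ s), intCast a i * indVec s i = (a i : ℝ) := by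
    intro i hi
    rw [Finset.mem_filter] at hi
    simp [intCast, indVec, hi.2]
  have h2 : ∀ i ∈ Finset.univ.filter (¬ · ∈ s), intCast a i * indVec s i = 0 := by
    intro i hi
    rw [Finset.mem_filter] at hi
    simp [intCast, indVec, hi.2]
  rw [Finset.sum_congr rfl h1, Finset.sum_congr rfl h2, Finset.sum_const_zero, add_zero]
  push_cast
  congr 1
  ext i
  simp

lemma pair_sum (a : Fin d → ℤ) {i j : Fin d} (hij : i ≠ j) :
    ∑ k ∈ ({i, j} : Finset (Fin d)), a k = a i + a j :=
  Finset.sum_pair hij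

/-- the graph attached to an unconditional reflexive polytope -/
def graphOfP (P : Set (Fin d → ℝ)) : SimpleGraph (Fin d) where
  Adj i j := i ≠ j ∧ indVec {i, j} ∉ P
  symm := by
    refine ⟨?_⟩
    rintro i j ⟨hij, hP⟩
    refine ⟨hij.symm, ?_⟩
    rwa [Finset.pair_comm]
  loopless := ⟨fun i h => h.1 rfl⟩

lemma convex_P {P : Set (Fin d → ℝ)} (hlat : IsLatticePolytope P) : Convex ℝ P := by
  obtain ⟨V, _, hV⟩ := hlat
  rw [hV]
  exact convex_convexHull ℝ _

lemma compact_P {P : Set (Fin d → ℝ)} (hlat : IsLatticePolytope P) : IsCompact P := by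
  obtain ⟨V, _, hV⟩ := hlat
  rw [hV]
  exact (V.finite_toSet.image intCast).isCompact_convexHull ℝ

/-- the midpoint trick: for `x ∈ P` the coordinate section `x i • e i` is in `P` -/
lemma coord_section_mem {P : Set (Fin d → ℝ)} (hconv : Convex ℝ P)
    (huncond : Unconditional P) {x : Fin d → ℝ} (hx : x ∈ P) (i : Fin d) :
    (fun j => if j = i then x i else 0) ∈ P := by
  classical
  set σ : Fin d → ℝ := fun j => if j = i then 1 else -1 with hσ
  have hsv : IsSignVec σ := by
    intro j
    by_cases h : j = i <;> simp [hσ, h]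
  have hx' : sflip σ x ∈ P := huncond σ hsv x hx
  have heq : (fun j => if j = i then x i else 0)
      = (1/2 : ℝ) • x + (1/2 : ℝ) • sflip σ x := by
    funext j
    by_cases h : j = i
    · subst h
      simp [sflip, hσ]
      try ring
    · simp [sflip, hσ, h]
      try ring
  rw [heq]
  exact hconv hx hx' (by norm_num) (by norm_num) (by norm_num)

lemma neg_mem {P : Set (Fin d → ℝ)} (huncond : Unconditional P) {x : Fin d → ℝ}
    (hx : x ∈ P) : (-x) ∈ P := by
  have h := huncond (fun _ => -1) (fun _ => Or.inr rfl) x hx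
  have : sflip (fun _ => -1) x = -x := by
    funext j
    simp [sflip]
  rwa [this] at h

lemma refl_cube_bound {P : Set (Fin d → ℝ)} (hlat : IsLatticePolytope P)
    (huncond : Unconditional P) {A : Finset (Fin d → ℤ)}
    (hdesc : P = {x | ∀ a ∈ A, dot (intCast a) x ≤ 1}) :
    ∀ x ∈ P, ∀ i, |x i| ≤ 1 := by
  intro x hx i
  by_contra habs
  push_neg at habs
  obtain ⟨R, hR⟩ := (compact_P hlat).isBounded.exists_norm_le
  have hR0 : 0 ≤ R := le_trans (norm_nonneg x) (hR x hx)
  -- the two signed coordinate sections are in P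
  have hm : (fun j => if j = i then x i else 0) ∈ P :=
    coord_section_mem (convex_P hlat) huncond hx i
  have hmneg : (fun j => if j = i then -(x i) else 0) ∈ P := by
    have := neg_mem huncond hm
    have e : (-(fun j => if j = i then x i else 0) : Fin d → ℝ)
        = fun j => if j = i then -(x i) else 0 := by
      funext j
      by_cases h : j = i <;> simp [h]
    rwa [e] at this
  -- every a ∈ A has a i = 0
  have hAzero : ∀ a ∈ A, a i = 0 := by
    intro a ha
    have h1 : (a i : ℝ) * x i ≤ 1 := by
      have := (hdesc ▸ hm) a ha
      rwa [dot_single] at this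
    have h2 : (a i : ℝ) * (-(x i)) ≤ 1 := by
      have := (hdesc ▸ hmneg) a ha
      rwa [dot_single] at this
    have habs1 : |(a i : ℝ) * x i| ≤ 1 := abs_le.mpr ⟨by linarith, h1⟩
    rw [abs_mul] at habs1
    have hai : |(a i : ℝ)| < 1 := by
      by_contra hle
      push_neg at hle
      nlinarith [abs_nonneg (x i), abs_nonneg ((a i : ℝ))]
    have : |a i| < 1 := by exact_mod_cast (by rwa [← Int.cast_abs] at hai : ((|a i| : ℤ) : ℝ) < 1)
    exact Int.abs_lt_one_iff.mp this
  -- then the ray along e i is contained in P, contradicting boundedness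
  have hray : (fun j => if j = i then R + 1 else 0) ∈ P := by
    rw [hdesc]
    intro a ha
    rw [dot_single, hAzero a ha]
    norm_num
  have := hR _ hray
  have hcoord : R + 1 ≤ ‖(fun j => if j = i then R + 1 else 0 : Fin d → ℝ)‖ := by
    have h := norm_le_pi_norm (fun j => if j = i then R + 1 else 0 : Fin d → ℝ) i
    simp only [if_pos rfl] at h
    rw [Real.norm_eq_abs] at h
    exact le_trans (le_abs_self _) h
  linarith

lemma refl_unit_mem {P : Set (Fin d → ℝ)} (hlat : IsLatticePolytope P)
    (huncond : Unconditional P) {A : Finset (Fin d → ℤ)}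
    (hdesc : P = {x | ∀ a ∈ A, dot (intCast a) x ≤ 1})
    (h0 : 0 ∈ interior P) : ∀ i, indVec {i} ∈ P := by
  intro i
  obtain ⟨V, hVne, hV⟩ := hlat
  rw [mem_interior_iff_mem_nhds, Metric.mem_nhds_iff] at h0
  obtain ⟨ε, hε, hball⟩ := h0
  have hp : (fun j => if j = i then ε/2 else 0) ∈ P := by
    apply hball
    rw [Metric.mem_ball, dist_pi_lt_iff hε]
    intro j
    rw [Real.dist_eq]
    by_cases h : j = i
    · simp [h]
      rw [abs_of_pos (by linarith)]
      linarith
    · simp [h]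
      linarith
  -- some generator has positive i-th coordinate
  have hgen : ∃ v ∈ V, 1 ≤ v i := by
    by_contra hcon
    push_neg at hcon
    have hbound : ∀ y ∈ P, dot (indVec {i}) y ≤ 0 := by
      intro y hy
      rw [hV] at hy
      refine dot_le_on_hull ?_ hy
      rintro z ⟨v, hv, rfl⟩
      rw [dot_indVec_left, Finset.sum_singleton]
      have h4 := hcon v hv
      have h3 : v i ≤ 0 := by omega
      show ((v i : ℤ) : ℝ) ≤ 0
      exact_mod_cast h3
    have := hbound _ hp
    rw [dot_indVec_left, Finset.sum_singleton] at this
    simp at this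
    linarith
  obtain ⟨v, hv, hvi⟩ := hgen
  have hvP : intCast v ∈ P := by
    rw [hV]
    exact subset_convexHull ℝ _ ⟨v, hv, rfl⟩
  have hvi1 : v i = 1 := by
    have hb0 := refl_cube_bound ⟨V, hVne, hV⟩ huncond hdesc _ hvP i
    have hb1 : |(v i : ℝ)| ≤ 1 := hb0
    have hb : |v i| ≤ 1 := by
      exact_mod_cast (by rwa [← Int.cast_abs] at hb1 : ((|v i| : ℤ) : ℝ) ≤ 1)
    have hb2 := abs_le.mp hb
    omega
  have := coord_section_mem (convex_P ⟨V, hVne, hV⟩) huncond hvP i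
  have heq : (fun j => if j = i then intCast v i else 0) = indVec {i} := by
    funext j
    by_cases h : j = i
    · subst h
      simp [intCast, hvi1, indVec]
    · simp [indVec, h]
  rwa [heq] at this

lemma refl_A_entries {P : Set (Fin d → ℝ)} (huncond : Unconditional P)
    {A : Finset (Fin d → ℤ)}
    (hdesc : P = {x | ∀ a ∈ A, dot (intCast a) x ≤ 1})
    (hunit : ∀ i, indVec {i} ∈ P) :
    ∀ a ∈ A, ∀ i, a i = -1 ∨ a i = 0 ∨ a i = 1 := by
  intro a ha i
  have h1 : (a i : ℝ) ≤ 1 := by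
    have := (hdesc ▸ hunit i) a ha
    rw [dot_intCast_indVec, Finset.sum_singleton] at this
    exact_mod_cast this
  have h2 : -(a i : ℝ) ≤ 1 := by
    have hneg := neg_mem huncond (hunit i)
    have := (hdesc ▸ hneg) a ha
    have e : dot (intCast a) (-indVec {i}) = -((∑ k ∈ ({i} : Finset (Fin d)), a k : ℤ) : ℝ) := by
      rw [← dot_intCast_indVec]
      rw [dot, dot, ← Finset.sum_neg_distrib]
      refine Finset.sum_congr rfl fun j _ => ?_
      simp
      try ring
    rw [e, Finset.sum_singleton] at this
    exact_mod_cast (by linarith : -(((a i : ℤ)):ℝ) ≤ 1)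
  have h1' : a i ≤ 1 := by exact_mod_cast h1
  have h2' : -1 ≤ a i := by
    have : (-1 : ℝ) ≤ (a i : ℝ) := by linarith
    exact_mod_cast this
  omega

/-! ### stable sets vs membership in `P`; `P ∩ orthant ⊆ STAB` -/

lemma sum_indVec (K s : Finset (Fin d)) : ∑ i ∈ K, indVec s i = ((K ∩ s).card : ℝ) := by
  classical
  rw [← Finset.sum_filter_add_sum_filter_not K (· ∈ s)]
  have h1 : ∀ i ∈ K.filter (· ∈ s), indVec s i = 1 := by
    intro i hi; rw [Finset.mem_filter] at hi; simp [indVec, hi.2]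
  have h2 : ∀ i ∈ K.filter (¬ · ∈ s), indVec s i = (0 : ℝ) := by
    intro i hi; rw [Finset.mem_filter] at hi; simp [indVec, hi.2]
  rw [Finset.sum_congr rfl h1, Finset.sum_congr rfl h2, Finset.sum_const, Finset.sum_const,
    Finset.filter_mem_eq_inter]
  simp

lemma sum_int_le_card_filter (a : Fin d → ℤ) (T : Finset (Fin d))
    (hA : ∀ i, a i = -1 ∨ a i = 0 ∨ a i = 1) :
    ∑ i ∈ T, a i ≤ ((T.filter (fun i => a i = 1)).card : ℤ) := by
  classical
  rw [← Finset.sum_filter_add_sum_filter_not T (fun i => a i = 1)]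
  have h1 : ∑ i ∈ T.filter (fun i => a i = 1), a i
      = ((T.filter (fun i => a i = 1)).card : ℤ) := by
    rw [Finset.sum_congr rfl (fun i hi => (Finset.mem_filter.mp hi).2), Finset.sum_const]
    simp
  have h2 : ∑ i ∈ T.filter (fun i => ¬ a i = 1), a i ≤ 0 := by
    apply Finset.sum_nonpos
    intro i hi
    rw [Finset.mem_filter] at hi
    rcases hA i with h | h | h <;> omega
  omega

lemma pair_not_mem {P : Set (Fin d → ℝ)} {A : Finset (Fin d → ℤ)}
    (hdesc : P = {x | ∀ a ∈ A, dot (intCast a) x ≤ 1}) {a : Fin d → ℤ} (ha : a ∈ A)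
    {i j : Fin d} (hij : i ≠ j) (hai : a i = 1) (haj : a j = 1) :
    indVec {i, j} ∉ P := by
  intro hmem
  have := (hdesc ▸ hmem) a ha
  rw [dot_intCast_indVec, pair_sum a hij, hai, haj] at this
  norm_num at this

lemma filter_one_clique {P : Set (Fin d → ℝ)} {A : Finset (Fin d → ℤ)}
    (hdesc : P = {x | ∀ a ∈ A, dot (intCast a) x ≤ 1}) {a : Fin d → ℤ} (ha : a ∈ A)
    (T : Finset (Fin d)) [DecidablePred (fun i => a i = 1)] :
    FClique (graphOfP P) (T.filter (fun i => a i = 1)) := by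
  intro i hi j hj hij
  rw [Finset.mem_filter] at hi hj
  exact ⟨hij, pair_not_mem hdesc ha hij hi.2 hj.2⟩

lemma stable_mem_P {P : Set (Fin d → ℝ)} {A : Finset (Fin d → ℤ)}
    (hdesc : P = {x | ∀ a ∈ A, dot (intCast a) x ≤ 1})
    (hA1 : ∀ a ∈ A, ∀ i, a i = -1 ∨ a i = 0 ∨ a i = 1) :
    ∀ s, IsStableSet (graphOfP P) s → indVec s ∈ P := by
  classical
  intro s hs
  rw [hdesc]
  intro a ha
  rw [dot_intCast_indVec]
  have hcard : ((s.filter (fun i => a i = 1)).card : ℤ) ≤ 1 := by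
    by_contra h
    push_neg at h
    have h2 : 1 < (s.filter (fun i => a i = 1)).card := by exact_mod_cast h
    obtain ⟨i, hi, j, hj, hij⟩ := Finset.one_lt_card.mp h2
    rw [Finset.mem_filter] at hi hj
    exact (hs i hi.1 j hj.1) ⟨hij, pair_not_mem hdesc ha hij hi.2 hj.2⟩
  have h3 := sum_int_le_card_filter a s (hA1 a ha)
  have h4 : (∑ i ∈ s, a i) ≤ 1 := le_trans h3 hcard
  exact_mod_cast h4

lemma subset_indVec_mem {P : Set (Fin d → ℝ)} (hconv : Convex ℝ P)
    (huncond : Unconditional P) {s s' : Finset (Fin d)} (hsub : s' ⊆ s)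
    (hmem : indVec s ∈ P) : indVec s' ∈ P := by
  classical
  set σ : Fin d → ℝ := fun i => if i ∈ s \ s' then -1 else 1 with hσ
  have hsv : IsSignVec σ := by
    intro i
    by_cases h : i ∈ s \ s'
    · right
      show (if i ∈ s \ s' then (-1:ℝ) else 1) = -1
      rw [if_pos h]
    · left
      show (if i ∈ s \ s' then (-1:ℝ) else 1) = 1
      rw [if_neg h]
  have hflip : sflip σ (indVec s) ∈ P := huncond σ hsv _ hmem
  have heq : indVec s' = (1/2 : ℝ) • indVec s + (1/2 : ℝ) • sflip σ (indVec s) := by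
    funext i
    simp only [Pi.add_apply, Pi.smul_apply, smul_eq_mul, sflip]
    by_cases h1 : i ∈ s'
    · have h2 : i ∈ s := hsub h1
      have h3 : i ∉ s \ s' := fun h => (Finset.mem_sdiff.mp h).2 h1
      simp [indVec, hσ, h1, h2, h3]
      norm_num
    · by_cases h2 : i ∈ s
      · have h3 : i ∈ s \ s' := Finset.mem_sdiff.mpr ⟨h2, h1⟩
        simp [indVec, hσ, h1, h2, h3]
      · have h3 : i ∉ s \ s' := fun h => h2 (Finset.mem_sdiff.mp h).1
        simp [indVec, hσ, h1, h2, h3]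
  rw [heq]
  exact hconv hmem hflip (by norm_num) (by norm_num) (by norm_num)

lemma memP_stable {P : Set (Fin d → ℝ)} (hconv : Convex ℝ P) (huncond : Unconditional P)
    {s : Finset (Fin d)} (hmem : indVec s ∈ P) : IsStableSet (graphOfP P) s := by
  intro i hi j hj hadj
  obtain ⟨hij, hnot⟩ := hadj
  refine hnot (subset_indVec_mem hconv huncond ?_ hmem)
  intro k hk
  rw [Finset.mem_insert, Finset.mem_singleton] at hk
  rcases hk with rfl | rfl
  · exact hi
  · exact hj

lemma orthant_mem_stab {P : Set (Fin d → ℝ)} (hlat : IsLatticePolytope P)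
    (huncond : Unconditional P) {A : Finset (Fin d → ℤ)}
    (hdesc : P = {x | ∀ a ∈ A, dot (intCast a) x ≤ 1}) :
    ∀ x ∈ P, (∀ i, 0 ≤ x i) → x ∈ stableSetPolytope (graphOfP P) := by
  classical
  intro x hx hx0
  obtain ⟨V, hVne, hV⟩ := hlat
  have hxr : x ∈ convexHull ℝ (intCast '' (V : Set (Fin d → ℤ))) := hV ▸ hx
  rw [mem_convexHull_iff_exists_fintype] at hxr
  obtain ⟨ι, hfin, w, zf, hw0, hw1, hzf, hsum⟩ := hxr
  have habs : ∀ k, ∃ s : Finset (Fin d),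
      IsStableSet (graphOfP P) s ∧ absVec (zf k) = indVec s := by
    intro k
    have hzP : zf k ∈ P := hV ▸ subset_convexHull ℝ _ (hzf k)
    obtain ⟨v, hv, hzk⟩ := hzf k
    have hcube := refl_cube_bound ⟨V, hVne, hV⟩ huncond hdesc _ hzP
    refine ⟨Finset.univ.filter (fun i => zf k i ≠ 0), ?_, ?_⟩
    · apply memP_stable (convex_P ⟨V, hVne, hV⟩) huncond
      have habsP : absVec (zf k) ∈ P := (mem_iff_abs_mem huncond _).mp hzP
      have heq : absVec (zf k) = indVec (Finset.univ.filter (fun i => zf k i ≠ 0)) := by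
        funext i
        have h1 : |zf k i| ≤ 1 := hcube i
        have h2 : ∃ m : ℤ, zf k i = (m : ℝ) := ⟨v i, by rw [← hzk]; rfl⟩
        obtain ⟨m, hm⟩ := h2
        have h3 : |m| ≤ 1 := by
          exact_mod_cast (by rwa [hm, ← Int.cast_abs] at h1 : ((|m| : ℤ) : ℝ) ≤ 1)
        have h4 := abs_le.mp h3
        by_cases h5 : zf k i = 0
        · simp [absVec, indVec, h5]
        · have h6 : m ≠ 0 := fun h => h5 (by rw [hm, h]; norm_num)
          have h7 : m = 1 ∨ m = -1 := by omega
          simp only [absVec, indVec, Finset.mem_filter, Finset.mem_univ, true_and, h5,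
            if_pos, not_false_eq_true]
          rcases h7 with h | h <;> rw [hm, h] <;> norm_num
      rwa [heq] at habsP
    · funext i
      have h1 : |zf k i| ≤ 1 := hcube i
      have h2 : ∃ m : ℤ, zf k i = (m : ℝ) := ⟨v i, by rw [← hzk]; rfl⟩
      obtain ⟨m, hm⟩ := h2
      have h3 : |m| ≤ 1 := by
        exact_mod_cast (by rwa [hm, ← Int.cast_abs] at h1 : ((|m| : ℤ) : ℝ) ≤ 1)
      have h4 := abs_le.mp h3
      by_cases h5 : zf k i = 0
      · simp [absVec, indVec, h5]
      · have h6 : m ≠ 0 := fun h => h5 (by rw [hm, h]; norm_num)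
        have h7 : m = 1 ∨ m = -1 := by omega
        simp only [absVec, indVec, Finset.mem_filter, Finset.mem_univ, true_and, h5,
          if_pos, not_false_eq_true]
        rcases h7 with h | h <;> rw [hm, h] <;> norm_num
  choose s hsstab hseq using habs
  have hyQ : (∑ k, w k • indVec (s k)) ∈ stableSetPolytope (graphOfP P) :=
    mem_convexHull_of_exists_fintype w (fun k => indVec (s k)) hw0 hw1
      (fun k => ⟨s k, hsstab k, rfl⟩) rfl
  apply stab_downclosed hyQ hx0
  intro i
  have hx_i : x i = ∑ k, w k * zf k i := by
    rw [← hsum, Finset.sum_apply]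
    exact Finset.sum_congr rfl fun k _ => rfl
  have hy_i : (∑ k, w k • indVec (s k)) i = ∑ k, w k * indVec (s k) i := by
    rw [Finset.sum_apply]
    exact Finset.sum_congr rfl fun k _ => rfl
  rw [hx_i, hy_i]
  apply Finset.sum_le_sum
  intro k _
  have h1 : zf k i ≤ |zf k i| := le_abs_self _
  have e : indVec (s k) i = |zf k i| := by rw [← hseq k]; rfl
  rw [e]
  exact mul_le_mul_of_nonneg_left h1 (hw0 k)

/-! ### Chvátal's argument: perfection from the geometry -/

lemma fclique_singleton (G : SimpleGraph (Fin d)) (i : Fin d) : FClique G {i} := by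
  intro a ha b hb hab
  rw [Finset.mem_singleton] at ha hb
  exact absurd (ha.trans hb.symm) hab

lemma chvatal {P : Set (Fin d → ℝ)} {A : Finset (Fin d → ℤ)}
    (hdesc : P = {x | ∀ a ∈ A, dot (intCast a) x ≤ 1})
    (hA1 : ∀ a ∈ A, ∀ i, a i = -1 ∨ a i = 0 ∨ a i = 1)
    (hPQ : ∀ x ∈ P, (∀ i, 0 ≤ x i) → x ∈ stableSetPolytope (graphOfP P)) :
    ∀ T : Finset (Fin d),
      Decomp (graphOfP P) (fun i => if i ∈ T then 1 else 0) (omegaT (graphOfP P) T) := by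
  classical
  set G := graphOfP P with hG
  intro T
  generalize hm : T.card = m
  induction m using Nat.strong_induction_on generalizing T with
  | _ m IH =>
  rcases Finset.eq_empty_or_nonempty T with rfl | ⟨i₀, hi₀⟩
  · refine ⟨fun _ => ∅, ?_, ?_⟩
    · intro k i hi
      simp at hi
    · intro i
      simp
  · set w := omegaT G T with hw
    clear_value w
    have hw1 : 1 ≤ w := by
      rw [hw]
      have h := omegaT_le (G := G) (T := T) (C := {i₀}) (by simpa using hi₀)
        (fclique_singleton G i₀)
      simpa using h
    have hwpos : (0:ℝ) < (w : ℝ) := by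
      have h : 0 < w := hw1
      exact_mod_cast h
    set x : Fin d → ℝ := (w : ℝ)⁻¹ • indVec T with hx
    have hxval : ∀ i, x i = (w:ℝ)⁻¹ * indVec T i := fun i => rfl
    have hxP : x ∈ P := by
      rw [hdesc]
      intro a ha
      have hlin := (dot_isLinearMap (intCast a)).map_smul ((w:ℝ)⁻¹) (indVec T)
      rw [hx, hlin, smul_eq_mul, dot_intCast_indVec]
      have h1 := sum_int_le_card_filter a T (hA1 a ha)
      have h2 : (T.filter (fun i => a i = 1)).card ≤ w := by
        rw [hw]
        exact omegaT_le (Finset.filter_subset _ _) (filter_one_clique hdesc ha T)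
      have h3 : ((∑ i ∈ T, a i : ℤ) : ℝ) ≤ (w : ℝ) := by
        have : (∑ i ∈ T, a i) ≤ (w : ℤ) := le_trans h1 (by exact_mod_cast h2)
        exact_mod_cast this
      calc (w:ℝ)⁻¹ * ((∑ i ∈ T, a i : ℤ) : ℝ) ≤ (w:ℝ)⁻¹ * (w:ℝ) :=
            mul_le_mul_of_nonneg_left h3 (by positivity)
      _ = 1 := inv_mul_cancel₀ (ne_of_gt hwpos)
    have hx0 : ∀ i, 0 ≤ x i := by
      intro i
      rw [hxval]
      apply mul_nonneg (by positivity)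
      by_cases h : i ∈ T <;> simp [indVec, h]
    obtain ⟨ι, hfin, wt, s, hwt0, hwt1, hsstab, hcoord⟩ := stab_coords (hPQ x hxP hx0)
    have hsupp : ∀ k, wt k ≠ 0 → s k ⊆ T := by
      intro k hk i his
      by_contra hiT
      have h0 : x i = 0 := by
        rw [hxval]
        simp [indVec, hiT]
      have h1 : ∑ j, wt j * indVec (s j) i = 0 := by rw [← hcoord i, h0]
      have h2 := (Finset.sum_eq_zero_iff_of_nonneg (fun j _ => by
        apply mul_nonneg (hwt0 j)
        by_cases h : i ∈ s j <;> simp [indVec, h])).mp h1 k (Finset.mem_univ k)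
      have h3 : indVec (s k) i = 1 := by simp [indVec, his]
      rw [h3, mul_one] at h2
      exact hk h2
    have htight : ∀ K, K ⊆ T → FClique G K → K.card = w →
        ∀ k, wt k ≠ 0 → ((K ∩ s k).card : ℝ) = 1 := by
      intro K hKT hKcl hKcard
      have hsum1 : ∑ i ∈ K, x i = 1 := by
        have h1 : ∀ i ∈ K, x i = (w:ℝ)⁻¹ := by
          intro i hi
          rw [hxval]
          have : i ∈ T := hKT hi
          simp [indVec, this]
        rw [Finset.sum_congr rfl h1, Finset.sum_const, nsmul_eq_mul, hKcard]
        exact mul_inv_cancel₀ (ne_of_gt hwpos)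
      have hsum2 : ∑ i ∈ K, x i = ∑ k, wt k * ((K ∩ s k).card : ℝ) := by
        calc ∑ i ∈ K, x i = ∑ i ∈ K, ∑ k, wt k * indVec (s k) i :=
              Finset.sum_congr rfl fun i _ => hcoord i
        _ = ∑ k, ∑ i ∈ K, wt k * indVec (s k) i := Finset.sum_comm
        _ = ∑ k, wt k * ((K ∩ s k).card : ℝ) := by
              refine Finset.sum_congr rfl fun k _ => ?_
              rw [← Finset.mul_sum, sum_indVec]
      have hle : ∀ k, ((K ∩ s k).card : ℝ) ≤ 1 := by
        intro k
        exact_mod_cast clique_inter_stable_card_le hKcl (hsstab k)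
      have hzero : ∑ k, wt k * (1 - ((K ∩ s k).card : ℝ)) = 0 := by
        have : ∑ k, wt k * (1 - ((K ∩ s k).card : ℝ))
            = (∑ k, wt k) - ∑ k, wt k * ((K ∩ s k).card : ℝ) := by
          rw [← Finset.sum_sub_distrib]
          refine Finset.sum_congr rfl fun k _ => ?_
          ring
        rw [this, hwt1, ← hsum2, hsum1]
        ring
      intro k hk
      have h2 := (Finset.sum_eq_zero_iff_of_nonneg (fun j _ =>
        mul_nonneg (hwt0 j) (by linarith [hle j]))).mp hzero k (Finset.mem_univ k)
      rcases mul_eq_zero.mp h2 with h | h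
      · exact absurd h hk
      · linarith
    obtain ⟨k₀, _, hk₀⟩ := Finset.exists_ne_zero_of_sum_ne_zero
      (by rw [hwt1]; exact one_ne_zero)
    set s₀ := s k₀ with hs₀
    have hs₀T : s₀ ⊆ T := hsupp k₀ hk₀
    obtain ⟨K₀, hK₀T, hK₀cl, hK₀card⟩ := omegaT_attained G T
    rw [← hw] at hK₀card
    have hs₀ne : s₀.Nonempty := by
      have h1 := htight K₀ hK₀T hK₀cl hK₀card k₀ hk₀
      have h2 : (K₀ ∩ s₀).card = 1 := by exact_mod_cast h1
      have hpos : 0 < (K₀ ∩ s₀).card := by omega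
      obtain ⟨u, hu⟩ := Finset.card_pos.mp hpos
      exact ⟨u, (Finset.mem_inter.mp hu).2⟩
    set T' := T \ s₀ with hT'
    have hT'ss : T' ⊂ T := Finset.sdiff_ssubset hs₀T hs₀ne
    have hcard' : T'.card < m := hm ▸ Finset.card_lt_card hT'ss
    have homega' : omegaT G T' ≤ w - 1 := by
      obtain ⟨C, hCT', hCcl, hCcard⟩ := omegaT_attained G T'
      rw [← hCcard]
      by_contra hcon
      push_neg at hcon
      have hCT : C ⊆ T := subset_trans hCT' Finset.sdiff_subset
      have hCw : C.card ≤ w := by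
        rw [hw]
        exact omegaT_le hCT hCcl
      have hCeq : C.card = w := by omega
      have h1 := htight C hCT hCcl hCeq k₀ hk₀
      have h2 : (C ∩ s₀).card = 1 := by exact_mod_cast h1
      have hpos : 0 < (C ∩ s₀).card := by omega
      obtain ⟨u, hu⟩ := Finset.card_pos.mp hpos
      have huC := (Finset.mem_inter.mp hu).1
      have hus := (Finset.mem_inter.mp hu).2
      have h3 := hCT' huC
      rw [Finset.mem_sdiff] at h3
      exact h3.2 hus
    have hIH := IH T'.card hcard' T' rfl
    have hpad : Decomp G (fun i => if i ∈ T' then 1 else 0) (w - 1) :=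
      decomp_mono hIH homega'
    obtain ⟨g, hgstab, hgcount⟩ := hpad
    obtain ⟨M, hMw⟩ : ∃ M, w = M + 1 := ⟨w - 1, by omega⟩
    have hM : w - 1 = M := by omega
    rw [hMw]
    refine ⟨Fin.snoc (fun j : Fin M => g (Fin.cast hM.symm j)) s₀, ?_, ?_⟩
    · intro k
      refine Fin.lastCases ?_ (fun j => ?_) k
      · rw [Fin.snoc_last]
        exact hsstab k₀
      · rw [Fin.snoc_castSucc]
        exact hgstab _
    · intro i
      change _ = if i ∈ T then 1 else 0
      rw [Finset.card_filter, Fin.sum_univ_castSucc]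
      simp only [Fin.snoc_castSucc, Fin.snoc_last]
      have hgcount' : (Finset.univ.filter fun k => i ∈ g k).card
          = (if i ∈ T' then 1 else 0) := hgcount i
      have hgc : ∑ k : Fin M, (if i ∈ g (Fin.cast hM.symm k) then 1 else 0)
          = (if i ∈ T' then 1 else 0) := by
        rw [← hgcount', Finset.card_filter]
        exact Fintype.sum_equiv (finCongr hM.symm) _ _ (fun k => rfl)
      rw [hgc]
      by_cases hiT : i ∈ T
      · rw [if_pos hiT]
        by_cases his : i ∈ s₀
        · rw [if_pos his, if_neg (by rw [hT', Finset.mem_sdiff]; exact fun h => h.2 his)]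
        · rw [if_neg his, if_pos (by rw [hT', Finset.mem_sdiff]; exact ⟨hiT, his⟩)]
      · have hisn : i ∉ s₀ := fun h => hiT (hs₀T h)
        rw [if_neg hiT, if_neg hisn,
          if_neg (by rw [hT', Finset.mem_sdiff]; exact fun h => hiT h.1)]

/-! ### Final assembly -/

lemma toFinsetCoeEq (T : Finset (Fin d)) : (↑T : Set (Fin d)).toFinite.toFinset = T := by
  ext i
  rw [Set.Finite.mem_toFinset]
  exact Finset.mem_coe

lemma forward_direction {P : Set (Fin d → ℝ)} (hlat : IsLatticePolytope P)
    (huncond : Unconditional P) (hrefl : IsReflexive P) :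
    ∃ G : SimpleGraph (Fin d), IsPerfect G ∧ P = UPoly (stableSetPolytope G) := by
  classical
  obtain ⟨h0, A, hdesc⟩ := hrefl
  have hconv := convex_P hlat
  have hunit := refl_unit_mem hlat huncond hdesc h0
  have hA1 := refl_A_entries huncond hdesc hunit
  have hPQ := orthant_mem_stab hlat huncond hdesc
  refine ⟨graphOfP P, ?_, ?_⟩
  · intro sset
    have hE : ((↑(sset.toFinite.toFinset) : Set (Fin d))) = sset := sset.toFinite.coe_toFinset
    rw [← hE]
    apply le_antisymm
    · exact cliqueNumber_le_chromaticNumber _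
    · rw [cliqueNumber_induce_eq, toFinsetCoeEq]
      exact SimpleGraph.chromaticNumber_le_iff_colorable.mpr
        (colorable_of_decomp (chvatal hdesc hA1 hPQ sset.toFinite.toFinset))
  · ext x
    rw [mem_UPoly_iff]
    constructor
    · intro hx
      exact hPQ (absVec x) ((mem_iff_abs_mem huncond x).mp hx) (fun i => abs_nonneg _)
    · intro hx
      have hsub : stableSetPolytope (graphOfP P) ⊆ P := by
        apply convexHull_min ?_ hconv
        rintro y ⟨s, hs, rfl⟩
        exact stable_mem_P hdesc hA1 s hs
      exact (mem_iff_abs_mem huncond x).mpr (hsub hx)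


/-- an unconditional lattice polytope with `0` in its interior is
reflexive iff it is the unconditional polytope of the stable set polytope of a
perfect graph. -/
theorem stmt10 {d : ℕ} (P : Set (Fin d → ℝ)) (hlat : IsLatticePolytope P)
    (huncond : Unconditional P) (h0 : 0 ∈ interior P) :
    IsReflexive P ↔
      ∃ G : SimpleGraph (Fin d), IsPerfect G ∧ P = UPoly (stableSetPolytope G) := by
  constructor
  · intro hrefl
    exact forward_direction hlat huncond hrefl
  · rintro ⟨G, hG, hPU⟩
    exact reverse_direction hG hPU h0
end

section
/- Let G be the comparability graph of a finite poset Π on [d]. The stable set polytope P_G (the chain polytope of Π) is Gorenstein (i.e., some lattice translate of some positive integer dilate is reflexive) if and only if all inclusion-maximal cliques of G, i.e., all maximal chains of Π, have the same size. More generally, for any perfect graph G, P_G is Gorenstein if and only if all inclusion-maximal cliques of G have the same cardinality. -/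
open Finset

/-- A lattice polytope is Gorenstein if some integer translate of some positive
integer dilate is reflexive. -/
def IsGorenstein {d : ℕ} (P : Set (Fin d → ℝ)) : Prop :=
  ∃ (c : ℕ) (q : Fin d → ℤ), 0 < c ∧
    IsReflexive ((fun x => intCast q + (c : ℝ) • x) '' P)

/-- An inclusion-maximal clique. -/
def IsMaxClique {d : ℕ} (G : SimpleGraph (Fin d)) (C : Finset (Fin d)) : Prop :=
  G.IsClique (C : Set (Fin d)) ∧
    ∀ C' : Finset (Fin d), G.IsClique (C' : Set (Fin d)) → C ⊆ C' → C = C'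


namespace S11
variable {d : ℕ} {G : SimpleGraph (Fin d)}

lemma dot_add_right (w u v : Fin d → ℝ) : dot w (u + v) = dot w u + dot w v := by
  simp [dot, mul_add, Finset.sum_add_distrib]

lemma dot_smul_right (w : Fin d → ℝ) (t : ℝ) (v : Fin d → ℝ) : dot w (t • v) = t * dot w v := by
  simp [dot, Finset.mul_sum]
  exact Finset.sum_congr rfl fun i _ => by ring

lemma dot_sum_right {ι : Type*} (w : Fin d → ℝ) (s : Finset ι) (f : ι → Fin d → ℝ) :
    dot w (∑ j ∈ s, f j) = ∑ j ∈ s, dot w (f j) := by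
  simp [dot, Finset.mul_sum]
  rw [Finset.sum_comm]

lemma dot_indVec_left (C : Finset (Fin d)) (y : Fin d → ℝ) :
    dot (indVec C) y = ∑ i ∈ C, y i := by
  simp [dot, indVec, ite_mul]

lemma dot_right_indVec (w : Fin d → ℝ) (s : Finset (Fin d)) :
    dot w (indVec s) = ∑ i ∈ s, w i := by
  simp [dot, indVec, mul_ite]

def QSTAB (G : SimpleGraph (Fin d)) : Set (Fin d → ℝ) :=
  {x | (∀ i, 0 ≤ x i) ∧ ∀ C : Finset (Fin d), G.IsClique (C : Set (Fin d)) → ∑ i ∈ C, x i ≤ 1}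

lemma indVec_mem (s : Finset (Fin d)) (hs : IsStableSet G s) :
    indVec s ∈ stableSetPolytope G :=
  subset_convexHull ℝ _ ⟨s, hs, rfl⟩

lemma clique_inter_stable {C s : Finset (Fin d)} (hC : G.IsClique (C : Set (Fin d)))
    (hs : IsStableSet G s) : (C ∩ s).card ≤ 1 := by
  refine Finset.card_le_one.2 fun a ha b hb => ?_
  simp only [Finset.mem_inter] at ha hb
  by_contra hne
  exact hs a ha.2 b hb.2 (hC ha.1 hb.1 hne)

lemma sum_indVec (C s : Finset (Fin d)) : ∑ i ∈ C, indVec s i = ((C ∩ s).card : ℝ) := by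
  simp [indVec, Finset.sum_ite_mem]

lemma convex_QSTAB : Convex ℝ (QSTAB G) := by
  intro x hx y hy a b ha hb hab
  refine ⟨fun i => add_nonneg (mul_nonneg ha (hx.1 i)) (mul_nonneg hb (hy.1 i)), fun C hC => ?_⟩
  have : ∑ i ∈ C, (a • x + b • y) i = a * ∑ i ∈ C, x i + b * ∑ i ∈ C, y i := by
    simp [Finset.mul_sum, Finset.sum_add_distrib]
  rw [this]
  calc a * ∑ i ∈ C, x i + b * ∑ i ∈ C, y i ≤ a * 1 + b * 1 := by
        gcongr
        · exact hx.2 C hC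
        · exact hy.2 C hC
    _ = 1 := by rw [mul_one, mul_one, hab]

lemma stab_subset_qstab : stableSetPolytope G ⊆ QSTAB G := by
  apply convexHull_min _ convex_QSTAB
  rintro x ⟨s, hs, rfl⟩
  refine ⟨fun i => by simp [indVec]; positivity, fun C hC => ?_⟩
  rw [sum_indVec]
  exact_mod_cast clique_inter_stable hC hs

lemma finite_gens : {x : Fin d → ℝ | ∃ s : Finset (Fin d), IsStableSet G s ∧ x = indVec s}.Finite := by
  apply Set.Finite.subset (Set.finite_range (indVec (d := d)))
  rintro x ⟨s, _, rfl⟩; exact ⟨s, rfl⟩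

lemma closed_stab : IsClosed (stableSetPolytope G) :=
  (finite_gens (G := G)).isClosed_convexHull ℝ

lemma COL_small (hG : IsPerfect G) (N : ℕ) (m : Fin d → ℕ) (hsmall : ∀ i, m i ≤ 1)
    (HW : ∀ C : Finset (Fin d), G.IsClique (C : Set (Fin d)) → ∑ i ∈ C, m i ≤ N) :
    ∃ S : Fin N → Finset (Fin d), (∀ t, IsStableSet G (S t)) ∧
      ∀ i, (∑ t, if i ∈ S t then 1 else 0) = m i := by
  classical
  set s : Set (Fin d) := {i | m i = 1} with hs
  have hcn : cliqueNumber (G.induce s) ≤ (N : ℕ∞) := by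
    apply sSup_le
    rintro n ⟨m', t, rfl, hcl⟩
    have hinj : Function.Injective (Subtype.val : s → Fin d) := Subtype.val_injective
    set C : Finset (Fin d) := t.image Subtype.val with hC
    have hcard : C.card = m' := by
      rw [hC, Finset.card_image_of_injective _ hinj, hcl.2]
    have hclique : G.IsClique (C : Set (Fin d)) := by
      intro a ha b hb hne
      simp only [hC, Finset.coe_image, Set.mem_image, Finset.mem_coe] at ha hb
      obtain ⟨a', ha', rfl⟩ := ha
      obtain ⟨b', hb', rfl⟩ := hb
      have hne' : a' ≠ b' := fun h => hne (by rw [h])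
      have := hcl.1 (Finset.mem_coe.2 ha') (Finset.mem_coe.2 hb') hne'
      simpa using this
    have hsub : ∀ i ∈ C, m i = 1 := by
      intro i hi
      simp only [hC, Finset.mem_image] at hi
      obtain ⟨⟨a, haa⟩, _, rfl⟩ := hi
      exact haa
    have := HW C hclique
    rw [Finset.sum_congr rfl hsub, Finset.sum_const, smul_eq_mul, mul_one, hcard] at this
    exact_mod_cast this
  rw [hG s] at hcn
  have hcol : (G.induce s).Colorable N := SimpleGraph.chromaticNumber_le_iff_colorable.1 hcn
  obtain ⟨col⟩ := hcol
  refine ⟨fun t => Finset.univ.filter (fun i => ∃ h : i ∈ s, col ⟨i, h⟩ = t), ?_, ?_⟩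
  · rintro t i hi j hj hadj
    simp only [Finset.mem_filter] at hi hj
    obtain ⟨-, hi', hit⟩ := hi
    obtain ⟨-, hj', hjt⟩ := hj
    have hne : (⟨i, hi'⟩ : s) ≠ ⟨j, hj'⟩ := by
      intro h
      exact hadj.ne (by simpa using congrArg Subtype.val h)
    have : (G.induce s).Adj ⟨i, hi'⟩ ⟨j, hj'⟩ := by simpa using hadj
    exact col.valid this (hit.trans hjt.symm)
  · intro i
    rcases Nat.le_one_iff_eq_zero_or_eq_one.1 (hsmall i) with h0 | h1
    · have hns : i ∉ s := by simp [hs, h0]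
      rw [h0]
      apply Finset.sum_eq_zero
      intro t _
      simp only [Finset.mem_filter, Finset.mem_univ, true_and, ite_eq_right_iff]
      intro ⟨h, _⟩; exact absurd h hns
    · have his : i ∈ s := h1
      rw [h1]
      have : ∀ t : Fin N, (i ∈ Finset.univ.filter (fun i => ∃ h : i ∈ s, col ⟨i, h⟩ = t))
          ↔ col ⟨i, his⟩ = t := by
        intro t
        simp only [Finset.mem_filter, Finset.mem_univ, true_and]
        constructor
        · rintro ⟨h, hc⟩; exact hc
        · intro hc; exact ⟨his, hc⟩
      simp only [this]
      rw [Finset.sum_ite_eq univ (col ⟨i, his⟩) (fun _ => 1)]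
      simp

lemma COL (hG : IsPerfect G) :
    ∀ (W N : ℕ) (m : Fin d → ℕ), ∑ i, m i ≤ W →
    (∀ C : Finset (Fin d), G.IsClique (C : Set (Fin d)) → ∑ i ∈ C, m i ≤ N) →
    ∃ S : Fin N → Finset (Fin d), (∀ t, IsStableSet G (S t)) ∧
      ∀ i, (∑ t, if i ∈ S t then 1 else 0) = m i := by
  classical
  intro W
  induction W with
  | zero =>
    intro N m hW HW
    have hm : ∀ i, m i = 0 := by
      intro i
      have := Finset.single_le_sum (f := m) (fun i _ => Nat.zero_le _) (Finset.mem_univ i)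
      omega
    exact ⟨fun _ => ∅, fun t i hi => absurd hi (Finset.notMem_empty i),
      fun i => by simp [hm i]⟩
  | succ W IH =>
    intro N m hW HW
    by_cases hsmall : ∀ i, m i ≤ 1
    · exact COL_small hG N m hsmall HW
    · push_neg at hsmall
      obtain ⟨v, hv⟩ := hsmall
      have hv2 : 2 ≤ m v := hv
      have hNv : m v ≤ N := by
        have hcl : G.IsClique (({v} : Finset (Fin d)) : Set (Fin d)) := by
          simp [SimpleGraph.isClique_singleton]
        have := HW {v} hcl
        simpa using this
      obtain ⟨N', rfl⟩ : ∃ N', N = N' + 1 := ⟨N - 1, by omega⟩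
      set m' : Fin d → ℕ := Function.update m v (m v - 1) with hm'
      have hm'v : m' v = m v - 1 := Function.update_self v _ m
      have hm'ne : ∀ i, i ≠ v → m' i = m i := fun i hi => Function.update_of_ne hi _ m
      have hm'le : ∀ i, m' i ≤ m i := by
        intro i
        by_cases h : i = v
        · subst h; rw [hm'v]; omega
        · rw [hm'ne i h]
      have hsum' : ∀ (C : Finset (Fin d)), v ∈ C → ∑ i ∈ C, m' i + 1 = ∑ i ∈ C, m i := by
        intro C hvC
        rw [← Finset.add_sum_erase C m' hvC, ← Finset.add_sum_erase C m hvC, hm'v]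
        have : ∑ i ∈ C.erase v, m' i = ∑ i ∈ C.erase v, m i :=
          Finset.sum_congr rfl fun i hi => hm'ne i (Finset.ne_of_mem_erase hi)
        omega
      have hsumne : ∀ (C : Finset (Fin d)), v ∉ C → ∑ i ∈ C, m' i = ∑ i ∈ C, m i := by
        intro C hvC
        exact Finset.sum_congr rfl fun i hi => hm'ne i (fun h => hvC (h ▸ hi))
      have hWm' : ∑ i, m' i ≤ W := by
        have := hsum' Finset.univ (Finset.mem_univ v)
        omega
      have HW' : ∀ C : Finset (Fin d), G.IsClique (C : Set (Fin d)) → ∑ i ∈ C, m' i ≤ N' + 1 :=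
        fun C hC => le_trans (Finset.sum_le_sum fun i _ => hm'le i) (HW C hC)
      obtain ⟨S', hS'stab, hS'count⟩ := IH (N' + 1) m' hWm' HW'
      have hvT : ∃ α, v ∈ S' α := by
        by_contra h
        push_neg at h
        have : (∑ t, if v ∈ S' t then 1 else 0) = 0 :=
          Finset.sum_eq_zero fun t _ => by simp [h t]
        rw [hS'count v, hm'v] at this
        omega
      obtain ⟨α, hα⟩ := hvT
      set T := S' α with hT
      have hm'T : ∀ i ∈ T, 1 ≤ m' i := by
        intro i hi
        rw [← hS'count i]
        calc 1 = (if i ∈ S' α then 1 else 0) := by simp [← hT, hi]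
          _ ≤ ∑ t, if i ∈ S' t then 1 else 0 :=
            Finset.single_le_sum (f := fun t => if i ∈ S' t then 1 else 0)
              (fun t _ => by positivity) (Finset.mem_univ α)
      set k : Fin d → ℕ := fun i => if i ∈ T ∧ i ≠ v then m' i - 1 else m' i with hk
      have hkle : ∀ i, k i ≤ m' i := by
        intro i; rw [hk]; dsimp only; split <;> omega
      have hWk : ∑ i, k i ≤ W :=
        le_trans (Finset.sum_le_sum fun i _ => hkle i) hWm'
      have HK : ∀ C : Finset (Fin d), G.IsClique (C : Set (Fin d)) → ∑ i ∈ C, k i ≤ N' := by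
        intro C hC
        by_cases hvC : v ∈ C
        · have h1 : ∑ i ∈ C, k i ≤ ∑ i ∈ C, m' i := Finset.sum_le_sum fun i _ => hkle i
          have h2 := hsum' C hvC
          have h3 := HW C hC
          omega
        · by_cases hCT : ∃ w, w ∈ C ∩ T
          · obtain ⟨w, hw⟩ := hCT
            have hwC : w ∈ C := (Finset.mem_inter.1 hw).1
            have hwT : w ∈ T := (Finset.mem_inter.1 hw).2
            have hwv : w ≠ v := fun h => hvC (h ▸ hwC)
            have hkw : k w = m' w - 1 := by rw [hk]; simp [hwT, hwv]
            have h1 : ∑ i ∈ C, k i ≤ (m' w - 1) + ∑ i ∈ C.erase w, m' i := by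
              rw [← Finset.add_sum_erase C k hwC, hkw]
              exact add_le_add_right (Finset.sum_le_sum fun i _ => hkle i) _
            have h2 : m' w + ∑ i ∈ C.erase w, m' i = ∑ i ∈ C, m' i :=
              Finset.add_sum_erase C m' hwC
            have h3 : ∑ i ∈ C, m' i = ∑ i ∈ C, m i := hsumne C hvC
            have h4 := HW C hC
            have h5 := hm'T w hwT
            omega
          · push_neg at hCT
            have hkm' : ∑ i ∈ C, k i = ∑ i ∈ C, m' i := by
              apply Finset.sum_congr rfl
              intro i hi
              rw [hk]
              have : ¬(i ∈ T ∧ i ≠ v) := fun ⟨h1, _⟩ => hCT i (Finset.mem_inter.2 ⟨hi, h1⟩)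
              simp [this]
            -- ∑_C m' = ∑_t |C ∩ S' t| ≤ N' since the α term is zero
            have hswap : ∑ i ∈ C, m' i = ∑ t, (C ∩ S' t).card := by
              have : ∀ i ∈ C, m' i = ∑ t, if i ∈ S' t then 1 else 0 :=
                fun i _ => (hS'count i).symm
              rw [Finset.sum_congr rfl this, Finset.sum_comm]
              apply Finset.sum_congr rfl
              intro t _
              rw [Finset.card_eq_sum_ones, ← Finset.sum_filter, Finset.filter_mem_eq_inter]
            have hbound : ∀ t, (C ∩ S' t).card ≤ 1 := fun t =>
              clique_inter_stable hC (hS'stab t)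
            have hzero : (C ∩ S' α).card = 0 := by
              rw [Finset.card_eq_zero, Finset.eq_empty_iff_forall_notMem]
              intro w hw
              exact absurd hw (fun h => hCT w (by rw [← hT] at h; exact h))
            have : ∑ t, (C ∩ S' t).card ≤ N' := by
              rw [← Finset.add_sum_erase _ _ (Finset.mem_univ α), hzero, zero_add]
              calc ∑ t ∈ Finset.univ.erase α, (C ∩ S' t).card
                  ≤ ∑ t ∈ Finset.univ.erase α, 1 :=
                    Finset.sum_le_sum fun t _ => hbound t
                _ = N' := by simp [Finset.card_erase_of_mem]
            omega
      obtain ⟨S'', hS''stab, hS''count⟩ := IH N' k hWk HK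
      refine ⟨Fin.snoc S'' T, ?_, ?_⟩
      · intro t
        refine Fin.lastCases ?_ ?_ t
        · rw [Fin.snoc_last]; exact hS'stab α
        · intro t'; rw [Fin.snoc_castSucc]; exact hS''stab t'
      · intro i
        rw [Fin.sum_univ_castSucc]
        simp only [Fin.snoc_castSucc, Fin.snoc_last]
        rw [hS''count i]
        by_cases hiv : i = v
        · subst hiv
          rw [hk]
          simp only [hα, ← hT]
          have : ¬(i ∈ T ∧ i ≠ i) := fun ⟨_, h⟩ => h rfl
          simp [this, hα, hm'v]
          omega
        · by_cases hiT : i ∈ T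
          · have : k i = m' i - 1 := by rw [hk]; simp [hiT, hiv]
            rw [this]
            have h1 := hm'T i hiT
            have h2 := hm'ne i hiv
            simp [hiT]
            omega
          · have : k i = m' i := by rw [hk]; simp [hiT]
            rw [this, hm'ne i hiv]
            simp [hiT]

lemma fulk_rat (hG : IsPerfect G) (N : ℕ) (hN : 0 < N) (m : Fin d → ℕ)
    (HW : ∀ C : Finset (Fin d), G.IsClique (C : Set (Fin d)) → ∑ i ∈ C, m i ≤ N) :
    (fun i => (m i : ℝ) / N) ∈ stableSetPolytope G := by
  obtain ⟨S, hSstab, hScount⟩ := COL hG (∑ i, m i) N m le_rfl HW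
  have hmem : ∀ t : Fin N, indVec (S t) ∈
      {x : Fin d → ℝ | ∃ s : Finset (Fin d), IsStableSet G s ∧ x = indVec s} :=
    fun t => ⟨S t, hSstab t, rfl⟩
  have hw : (0:ℝ) < ∑ _t : Fin N, (1:ℝ) := by simp [hN]
  have := Finset.centerMass_mem_convexHull (Finset.univ : Finset (Fin N))
    (w := fun _ => (1:ℝ)) (fun _ _ => zero_le_one) hw (z := fun t => indVec (S t))
    (fun t _ => hmem t)
  convert this using 1
  · rfl
  rw [Finset.centerMass]
  funext i
  simp only [Pi.smul_apply, smul_eq_mul]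
  rw [Finset.sum_const, Finset.card_univ, Fintype.card_fin, nsmul_eq_mul, mul_one]
  have h1 : (∑ t : Fin N, (1:ℝ) • indVec (S t)) i = ((∑ t, if i ∈ S t then 1 else 0 : ℕ) : ℝ) := by
    push_cast
    rw [Finset.sum_apply]
    apply Finset.sum_congr rfl
    intro t _
    simp [indVec]
  rw [h1, hScount i]
  rw [div_eq_inv_mul]

lemma fulk (hG : IsPerfect G) : QSTAB G ⊆ stableSetPolytope G := by
  intro x hx
  rw [← (closed_stab (G := G)).closure_eq]
  rw [Metric.mem_closure_iff]
  intro ε hε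
  obtain ⟨N, hNgt⟩ := exists_nat_gt (1/ε)
  have hNpos : 0 < N := by
    have h1 : (0:ℝ) < 1/ε := by positivity
    have h2 : (0:ℝ) < N := lt_trans h1 hNgt
    exact_mod_cast h2
  have hNR : (0:ℝ) < N := by exact_mod_cast hNpos
  set m : Fin d → ℕ := fun i => ⌊(N:ℝ) * x i⌋₊ with hm
  have hmle : ∀ i, (m i : ℝ) ≤ N * x i :=
    fun i => Nat.floor_le (mul_nonneg hNR.le (hx.1 i))
  have HW : ∀ C : Finset (Fin d), G.IsClique (C : Set (Fin d)) → ∑ i ∈ C, m i ≤ N := by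
    intro C hC
    have hreal : (↑(∑ i ∈ C, m i) : ℝ) ≤ N := by
      push_cast
      calc ∑ i ∈ C, (m i : ℝ) ≤ ∑ i ∈ C, (N:ℝ) * x i := Finset.sum_le_sum fun i _ => hmle i
        _ = N * ∑ i ∈ C, x i := by rw [Finset.mul_sum]
        _ ≤ N * 1 := by
            have := hx.2 C hC
            nlinarith
        _ = N := mul_one _
    exact_mod_cast hreal
  refine ⟨fun i => (m i : ℝ) / N, fulk_rat hG N hNpos m HW, ?_⟩
  rw [dist_pi_lt_iff hε]
  intro i
  rw [Real.dist_eq]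
  have h1 : (m i : ℝ) / N ≤ x i := by
    rw [div_le_iff₀ hNR]
    calc (m i : ℝ) ≤ N * x i := hmle i
      _ = x i * N := mul_comm _ _
  have h2 : x i - (m i : ℝ)/N < 1/N := by
    rw [sub_lt_iff_lt_add, ← add_div, lt_div_iff₀ hNR]
    have := Nat.lt_floor_add_one ((N:ℝ) * x i)
    push_cast
    nlinarith [this]
  have h3 : (1:ℝ)/N < ε := by
    rw [div_lt_iff₀ hNR]
    rw [div_lt_iff₀ hε] at hNgt
    nlinarith
  rw [abs_of_nonneg (by linarith)]
  linarith

lemma tight (hd : 0 < d) (A : Finset (Fin d → ℤ)) (K : Set (Fin d → ℝ))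
    (hK : K = {y | ∀ a ∈ A, dot (intCast a) y ≤ 1})
    (h0 : 0 ∈ interior K)
    (w : Fin d → ℝ) (hww : 0 < dot w w) (β : ℝ)
    (hval : ∀ y ∈ K, dot w y ≤ β)
    (yj : Fin d → (Fin d → ℝ)) (hyj : ∀ j, yj j ∈ K) (htight : ∀ j, dot w (yj j) = β) :
    0 < β ∧ ∃ a ∈ A, ∀ j, dot (intCast a) (yj j) = 1 := by
  have hdR : (0:ℝ) < d := by exact_mod_cast hd
  -- β > 0
  obtain ⟨ε, hε, hball⟩ := Metric.mem_nhds_iff.1 (mem_interior_iff_mem_nhds.1 h0)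
  have hβ : 0 < β := by
    set t : ℝ := ε / (2 * (‖w‖ + 1)) with ht
    have htpos : 0 < t := by positivity
    have hmem : t • w ∈ K := by
      apply hball
      rw [Metric.mem_ball, dist_zero_right, norm_smul, Real.norm_eq_abs, abs_of_pos htpos]
      have hwp : (0:ℝ) < ‖w‖ + 1 := by positivity
      have h12 : t * (‖w‖ + 1) = ε / 2 := by
        rw [ht]; field_simp
      nlinarith [norm_nonneg w]
    have := hval _ hmem
    rw [dot_smul_right] at this
    nlinarith
  refine ⟨hβ, ?_⟩
  -- A is nonempty
  have hA : A.Nonempty := by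
    rcases Finset.eq_empty_or_nonempty A with rfl | h
    · exfalso
      have hmem : ((β+1)/dot w w) • w ∈ K := by rw [hK]; intro a ha; simp at ha
      have := hval _ hmem
      rw [dot_smul_right, div_mul_cancel₀ _ (ne_of_gt hww)] at this
      linarith
    · exact h
  -- centroid
  set b : Fin d → ℝ := (d:ℝ)⁻¹ • ∑ j, yj j with hb
  have hdotb : ∀ u : Fin d → ℝ, dot u b = (d:ℝ)⁻¹ * ∑ j, dot u (yj j) := by
    intro u
    rw [hb, dot_smul_right, dot_sum_right]
  clear_value b
  have hyjK : ∀ j, ∀ a ∈ A, dot (intCast a) (yj j) ≤ 1 := by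
    intro j a ha
    have := hyj j
    rw [hK] at this
    exact this a ha
  have hbA : ∀ a ∈ A, dot (intCast a) b ≤ 1 := by
    intro a ha
    rw [hdotb]
    calc (d:ℝ)⁻¹ * ∑ j, dot (intCast a) (yj j) ≤ (d:ℝ)⁻¹ * ∑ _j : Fin d, (1:ℝ) := by
          apply mul_le_mul_of_nonneg_left _ (by positivity)
          exact Finset.sum_le_sum fun j _ => hyjK j a ha
      _ = 1 := by simp; field_simp
  have hwb : dot w b = β := by
    rw [hdotb]
    rw [Finset.sum_congr rfl (fun j _ => htight j), Finset.sum_const]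
    simp
    field_simp
  -- exists tight a at b
  have hexa : ∃ a ∈ A, dot (intCast a) b = 1 := by
    by_contra hcon
    push_neg at hcon
    have hlt : ∀ a ∈ A, dot (intCast a) b < 1 :=
      fun a ha => lt_of_le_of_ne (hbA a ha) (hcon a ha)
    set ε' : ℝ := A.inf' hA (fun a => (1 - dot (intCast a) b)/(1 + |dot (intCast a) w|)) with hε'
    have hε'pos : 0 < ε' := by
      rw [hε', Finset.lt_inf'_iff]
      intro a ha
      have := hlt a ha
      apply div_pos (by linarith) (by positivity)
    have hyK : b + ε' • w ∈ K := by
      rw [hK]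
      intro a ha
      rw [dot_add_right, dot_smul_right]
      have h1 : ε' ≤ (1 - dot (intCast a) b)/(1 + |dot (intCast a) w|) :=
        Finset.inf'_le _ ha
      set D := dot (intCast a) b
      set M := |dot (intCast a) w|
      have hM : 0 ≤ M := abs_nonneg _
      have hD : D < 1 := hlt a ha
      have h2 : dot (intCast a) w ≤ M := le_abs_self _
      have h3 : ε' * dot (intCast a) w ≤ ε' * M :=
        mul_le_mul_of_nonneg_left h2 hε'pos.le
      have h4 : ε' * M ≤ (1 - D)/(1 + M) * M :=
        mul_le_mul_of_nonneg_right h1 hM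
      have h5 : (1 - D)/(1 + M) * M ≤ 1 - D := by
        rw [div_mul_eq_mul_div, div_le_iff₀ (by positivity)]
        nlinarith
      linarith
    have := hval _ hyK
    rw [dot_add_right, dot_smul_right, hwb] at this
    nlinarith
  obtain ⟨a, ha, hab⟩ := hexa
  refine ⟨a, ha, ?_⟩
  have hsum : ∑ j, (1 - dot (intCast a) (yj j)) = 0 := by
    rw [Finset.sum_sub_distrib, Finset.sum_const]
    have : ∑ j, dot (intCast a) (yj j) = d := by
      have := hab
      rw [hdotb] at this
      field_simp at this
      linarith
    rw [this]
    simp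
  have hall := (Finset.sum_eq_zero_iff_of_nonneg
    (fun j _ => by linarith [hyjK j a ha])).1 hsum
  intro j
  have := hall j (Finset.mem_univ j)
  linarith

lemma exists_maxclique (C0 : Finset (Fin d)) (h : G.IsClique (C0 : Set (Fin d))) :
    ∃ C, IsMaxClique G C ∧ C0 ⊆ C := by
  classical
  set s : Finset (Finset (Fin d)) :=
    Finset.univ.filter (fun C => G.IsClique (C : Set (Fin d)) ∧ C0 ⊆ C) with hs
  have hne : s.Nonempty := ⟨C0, by simp [hs, h]⟩
  obtain ⟨C, hC, hmax⟩ := Finset.exists_max_image s Finset.card hne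
  simp only [hs, Finset.mem_filter, Finset.mem_univ, true_and] at hC
  refine ⟨C, ⟨hC.1, ?_⟩, hC.2⟩
  intro C' hC' hsub
  have hC's : C' ∈ s := by simp [hs, hC', hC.2.trans hsub]
  exact Finset.eq_of_subset_of_card_le hsub (hmax C' hC's)

lemma maxclique_nonempty (hd : 0 < d) {C : Finset (Fin d)} (hC : IsMaxClique G C) :
    C.Nonempty := by
  rcases Finset.eq_empty_or_nonempty C with rfl | h
  · exfalso
    have i : Fin d := ⟨0, hd⟩
    have hcl : G.IsClique (({i} : Finset (Fin d)) : Set (Fin d)) := by simp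
    have := hC.2 {i} hcl (Finset.empty_subset _)
    exact absurd this.symm (Finset.singleton_ne_empty i)
  · exact h

lemma nonneighbor {C : Finset (Fin d)} (hC : IsMaxClique G C) {v : Fin d} (hv : v ∉ C) :
    ∃ u ∈ C, ¬ G.Adj v u := by
  by_contra hcon
  push_neg at hcon
  have hclique : G.IsClique ((insert v C : Finset (Fin d)) : Set (Fin d)) := by
    intro a ha b hb hne
    simp only [Finset.coe_insert, Set.mem_insert_iff, Finset.mem_coe] at ha hb
    rcases ha with rfl | ha <;> rcases hb with rfl | hb
    · exact absurd rfl hne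
    · exact hcon b hb
    · exact G.adj_symm (hcon a ha)
    · exact hC.1 ha hb hne
  have := hC.2 _ hclique (Finset.subset_insert v C)
  have hvC : v ∈ C := by rw [this]; exact Finset.mem_insert_self v C
  exact hv hvC

def coordVec (i : Fin d) : Fin d → ℤ := fun j => if j = i then (-1:ℤ) else 0
def cliqueVec (C : Finset (Fin d)) : Fin d → ℤ := fun j => if j ∈ C then (1:ℤ) else 0

lemma dot_coordVec (i : Fin d) (y : Fin d → ℝ) : dot (intCast (coordVec i)) y = -(y i) := by
  simp [dot, intCast, coordVec, apply_ite (fun z : ℤ => (z:ℝ)), ite_mul]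

lemma dot_cliqueVec (C : Finset (Fin d)) (y : Fin d → ℝ) :
    dot (intCast (cliqueVec C)) y = ∑ j ∈ C, y j := by
  simp [dot, intCast, cliqueVec, apply_ite (fun z : ℤ => (z:ℝ)), ite_mul]

noncomputable def AFin (G : SimpleGraph (Fin d)) : Finset (Fin d → ℤ) := by
  classical
  exact (Finset.univ.image (fun i : Fin d => coordVec i)) ∪
    ((Finset.univ.powerset.filter (fun C => IsMaxClique G C)).image cliqueVec)

lemma mem_AFin {a : Fin d → ℤ} :
    a ∈ AFin G ↔ (∃ i, a = coordVec i) ∨ ∃ C, IsMaxClique G C ∧ a = cliqueVec C := by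
  classical
  simp [AFin, eq_comm]

theorem forward (hG : IsPerfect G)
    (heq : ∀ C C' : Finset (Fin d), IsMaxClique G C → IsMaxClique G C' → C.card = C'.card) :
    IsGorenstein (stableSetPolytope G) := by
  classical
  obtain ⟨C₀, hC₀, -⟩ := exists_maxclique (G := G) ∅ (by simp)
  set s := C₀.card with hs
  have hcard : ∀ C, IsMaxClique G C → C.card = s := fun C hC => heq C C₀ hC hC₀
  set q : Fin d → ℤ := fun _ => (-1 : ℤ) with hq
  have hcast : ((s + 1 : ℕ) : ℝ) = (s : ℝ) + 1 := by push_cast; ring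
  have hKeq : ((fun x => intCast q + ((s + 1 : ℕ) : ℝ) • x) '' stableSetPolytope G) =
      {y | ∀ a ∈ AFin G, dot (intCast a) y ≤ 1} := by
    apply Set.eq_of_subset_of_subset
    · rintro y ⟨x, hx, rfl⟩
      dsimp only
      intro a ha
      have hxq := stab_subset_qstab hx
      rcases mem_AFin.1 ha with ⟨i, rfl⟩ | ⟨C, hC, rfl⟩
      · rw [dot_coordVec]
        have h1 : (intCast q + ((s + 1 : ℕ) : ℝ) • x) i = -1 + ((s:ℝ)+1) * x i := by
          simp [intCast, hq, hcast]
        rw [h1]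
        have := hxq.1 i
        nlinarith [hxq.1 i]
      · rw [dot_cliqueVec]
        have h1 : ∑ j ∈ C, (intCast q + ((s + 1 : ℕ) : ℝ) • x) j
            = -(C.card : ℝ) + ((s:ℝ)+1) * ∑ j ∈ C, x j := by
          simp only [Pi.add_apply, Pi.smul_apply, smul_eq_mul, intCast, hq, hcast]
          rw [Finset.sum_add_distrib, Finset.sum_const, ← Finset.mul_sum]
          push_cast
          ring
        rw [h1, hcard C hC]
        have h2 : ∑ j ∈ C, x j ≤ 1 := hxq.2 C hC.1
        nlinarith
    · intro y hy
      set x : Fin d → ℝ := ((s:ℝ) + 1)⁻¹ • (y + fun _ => (1:ℝ)) with hx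
      have hsp : (0:ℝ) < (s:ℝ) + 1 := by positivity
      have hyge : ∀ i, -1 ≤ y i := by
        intro i
        have := hy (coordVec i) (mem_AFin.2 (Or.inl ⟨i, rfl⟩))
        rw [dot_coordVec] at this
        linarith
      have hxnn : ∀ i, 0 ≤ x i := by
        intro i
        rw [hx]
        simp only [Pi.smul_apply, Pi.add_apply, smul_eq_mul]
        have := hyge i
        have h3 : (0:ℝ) ≤ y i + 1 := by linarith
        positivity
      have hxq : x ∈ QSTAB G := by
        refine ⟨hxnn, fun C hC => ?_⟩
        obtain ⟨Cm, hCm, hsub⟩ := exists_maxclique C hC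
        have h4 : ∑ i ∈ C, x i ≤ ∑ i ∈ Cm, x i :=
          Finset.sum_le_sum_of_subset_of_nonneg hsub (fun i _ _ => hxnn i)
        have h5 : ∑ i ∈ Cm, x i = ((s:ℝ)+1)⁻¹ * (∑ i ∈ Cm, y i + s) := by
          rw [hx]
          simp only [Pi.smul_apply, Pi.add_apply, smul_eq_mul]
          rw [← Finset.mul_sum, Finset.sum_add_distrib, Finset.sum_const, hcard Cm hCm]
          simp
        have h6 : ∑ i ∈ Cm, y i ≤ 1 := by
          have := hy (cliqueVec Cm) (mem_AFin.2 (Or.inr ⟨Cm, hCm, rfl⟩))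
          rwa [dot_cliqueVec] at this
        have h7 : ((s:ℝ)+1)⁻¹ * (∑ i ∈ Cm, y i + s) ≤ 1 := by
          rw [inv_mul_le_iff₀ hsp]
          linarith
        linarith
      refine ⟨x, fulk hG hxq, ?_⟩
      dsimp only
      funext i
      simp only [Pi.add_apply, Pi.smul_apply, smul_eq_mul, hx, intCast, hq, hcast]
      push_cast
      field_simp
      ring
  refine ⟨s + 1, q, Nat.succ_pos s, ?_, AFin G, hKeq⟩
  rw [hKeq]
  have hopen : IsOpen {y : Fin d → ℝ | ∀ a ∈ AFin G, dot (intCast a) y < 1} := by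
    have : {y : Fin d → ℝ | ∀ a ∈ AFin G, dot (intCast a) y < 1} =
        ⋂ a ∈ (AFin G : Set (Fin d → ℤ)), {y | dot (intCast a) y < 1} := by
      ext y; simp
    rw [this]
    apply (AFin G).finite_toSet.isOpen_biInter
    intro a _
    apply isOpen_lt _ continuous_const
    unfold dot
    exact continuous_finset_sum _ fun i _ => (continuous_const.mul (continuous_apply i))
  apply mem_interior.2
  refine ⟨_, ?_, hopen, ?_⟩
  · intro y hy a ha
    exact le_of_lt (hy a ha)
  · intro a _
    simp [dot]

lemma indVec_empty : indVec (∅ : Finset (Fin d)) = 0 := by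
  funext i; simp [indVec]

lemma stable_empty : IsStableSet G (∅ : Finset (Fin d)) := fun i hi => absurd hi (by simp)

lemma stable_singleton (j : Fin d) : IsStableSet G {j} := by
  intro a ha b hb
  simp only [Finset.mem_singleton] at ha hb
  subst ha; subst hb
  exact G.irrefl

lemma stable_pair {j u : Fin d} (h : ¬ G.Adj j u) : IsStableSet G {j, u} := by
  intro a ha b hb
  simp only [Finset.mem_insert, Finset.mem_singleton] at ha hb
  rcases ha with rfl | rfl <;> rcases hb with rfl | rfl
  · exact G.irrefl
  · exact h
  · exact fun hadj => h (G.adj_symm hadj)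
  · exact G.irrefl

theorem backward (hGor : IsGorenstein (stableSetPolytope G)) :
    ∀ C C' : Finset (Fin d), IsMaxClique G C → IsMaxClique G C' → C.card = C'.card := by
  classical
  rcases Nat.eq_zero_or_pos d with hd | hd
  · intro C C' _ _
    have hC : C = ∅ := Finset.eq_empty_of_forall_notMem
      (fun x _ => absurd x.isLt (by omega))
    have hC' : C' = ∅ := Finset.eq_empty_of_forall_notMem
      (fun x _ => absurd x.isLt (by omega))
    rw [hC, hC']
  obtain ⟨c, q, hc, h0, A, hK⟩ := hGor
  have hcR : (0:ℝ) < (c:ℝ) := by exact_mod_cast hc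
  set F : (Fin d → ℝ) → (Fin d → ℝ) := fun x => intCast q + (c : ℝ) • x with hF
  set K : Set (Fin d → ℝ) := F '' stableSetPolytope G with hKdef
  -- evaluation lemma
  have hFdot : ∀ (w x : Fin d → ℝ), dot w (F x) = dot w (intCast q) + c * dot w x := by
    intro w x
    rw [hF]
    dsimp only
    rw [dot_add_right, dot_smul_right]
  -- Claim 1 : q i = -1
  have claim1 : ∀ i, q i = -1 := by
    intro i
    set w : Fin d → ℝ := intCast (coordVec i) with hw
    have hww : (0:ℝ) < dot w w := by
      rw [hw, dot_coordVec]
      simp [intCast, coordVec]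
    have hval : ∀ y ∈ K, dot w y ≤ -(q i : ℝ) := by
      rintro y ⟨x, hx, rfl⟩
      rw [hw, dot_coordVec]
      have h1 : F x i = (q i : ℝ) + c * x i := by simp [hF, intCast]
      rw [h1]
      have := (stab_subset_qstab hx).1 i
      nlinarith
    set pfun : Fin d → (Fin d → ℝ) :=
      fun j => if j = i then 0 else indVec {j} with hp
    have hpP : ∀ j, pfun j ∈ stableSetPolytope G := by
      intro j
      rw [hp]
      dsimp only
      split
      · rw [← indVec_empty]; exact indVec_mem _ stable_empty
      · exact indVec_mem _ (stable_singleton j)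
    have hpzero : ∀ j, pfun j i = 0 := by
      intro j
      rw [hp]
      dsimp only
      split
      · rfl
      · next hji => simp [indVec, Ne.symm hji]
    have htight : ∀ j, dot w (F (pfun j)) = -(q i : ℝ) := by
      intro j
      rw [hw, dot_coordVec]
      have h1 : F (pfun j) i = (q i : ℝ) + c * (pfun j) i := by simp [hF, intCast]
      rw [h1, hpzero j]
      ring
    obtain ⟨hβ, a, ha, htt⟩ := tight hd A K hK h0 w hww (-(q i : ℝ)) hval
      (fun j => F (pfun j)) (fun j => ⟨pfun j, hpP j, rfl⟩) htight
    -- a j = 0 for j ≠ i, and dot a q = 1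
    have hqa : dot (intCast a) (intCast q) = 1 := by
      have := htt i
      rw [hFdot] at this
      have h2 : pfun i = 0 := by rw [hp]; simp
      rw [h2] at this
      have h3 : dot (intCast a) (0 : Fin d → ℝ) = 0 := by simp [dot]
      rw [h3] at this
      linarith
    have haj : ∀ j, j ≠ i → (a j : ℝ) = 0 := by
      intro j hj
      have := htt j
      rw [hFdot, hqa] at this
      have h2 : pfun j = indVec {j} := by rw [hp]; simp [hj]
      rw [h2, dot_right_indVec] at this
      simp only [Finset.sum_singleton, intCast] at this
      nlinarith
    have hsum : dot (intCast a) (intCast q) = (a i : ℝ) * (q i : ℝ) := by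
      unfold dot
      rw [Finset.sum_eq_single i]
      · rfl
      · intro b _ hb
        simp [intCast, haj b hb]
      · intro h; exact absurd (Finset.mem_univ i) h
    rw [hsum] at hqa
    have hZ : a i * q i = 1 := by exact_mod_cast hqa
    have hqneg : q i < 0 := by
      have : (q i : ℝ) < 0 := by linarith
      exact_mod_cast this
    rcases Int.eq_one_or_neg_one_of_mul_eq_one' hZ with ⟨_, h⟩ | ⟨_, h⟩
    · omega
    · exact h
  -- Claim 2 : for a maximal clique C, (∑ q over C) + c = 1, hence card C = c - 1
  have claim2 : ∀ C : Finset (Fin d), IsMaxClique G C → (C.card : ℤ) = (c : ℤ) - 1 := by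
    intro C hC
    obtain ⟨u₀, hu₀⟩ := maxclique_nonempty hd hC
    set w : Fin d → ℝ := intCast (cliqueVec C) with hw
    have hww : (0:ℝ) < dot w w := by
      rw [hw, dot_cliqueVec]
      have : ∀ j ∈ C, intCast (cliqueVec C) j = 1 := by
        intro j hj; simp [intCast, cliqueVec, hj]
      rw [Finset.sum_congr rfl this, Finset.sum_const]
      have hpos : 0 < C.card := Finset.card_pos.2 ⟨u₀, hu₀⟩
      rw [nsmul_eq_mul, mul_one]
      exact_mod_cast hpos
    set β : ℝ := (∑ k ∈ C, (q k : ℝ)) + c with hβdef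
    have hval : ∀ y ∈ K, dot w y ≤ β := by
      rintro y ⟨x, hx, rfl⟩
      rw [hw, dot_cliqueVec]
      have h1 : ∀ j ∈ C, F x j = (q j : ℝ) + c * x j := by
        intro j _; simp [hF, intCast]
      rw [Finset.sum_congr rfl h1, Finset.sum_add_distrib, ← Finset.mul_sum]
      have h2 : ∑ j ∈ C, x j ≤ 1 := (stab_subset_qstab hx).2 C hC.1
      rw [hβdef]
      nlinarith
    -- points
    set φ : ∀ j : Fin d, j ∉ C → Fin d := fun j hj => (nonneighbor hC hj).choose with hφ
    have hφspec : ∀ j (hj : j ∉ C), (φ j hj) ∈ C ∧ ¬ G.Adj j (φ j hj) :=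
      fun j hj => (nonneighbor hC hj).choose_spec
    set pfun : Fin d → (Fin d → ℝ) :=
      fun j => if hj : j ∈ C then indVec {j} else indVec {j, φ j hj} with hp
    have hpP : ∀ j, pfun j ∈ stableSetPolytope G := by
      intro j
      rw [hp]
      dsimp only
      split
      · exact indVec_mem _ (stable_singleton j)
      · next hj => exact indVec_mem _ (stable_pair (hφspec j hj).2)
    have hptight : ∀ j, ∑ k ∈ C, pfun j k = 1 := by
      intro j
      rw [hp]
      dsimp only
      split
      · next hj =>
        have : ∀ k ∈ C, indVec {j} k = if k = j then (1:ℝ) else 0 := by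
          intro k _; simp [indVec, Finset.mem_singleton]
        rw [Finset.sum_congr rfl this, Finset.sum_ite_eq' C j (fun _ => (1:ℝ))]
        simp [hj]
      · next hj =>
        have hu : φ j hj ∈ C := (hφspec j hj).1
        have hju : j ≠ φ j hj := fun h => hj (h ▸ hu)
        have : ∀ k ∈ C, indVec {j, φ j hj} k = if k = φ j hj then (1:ℝ) else 0 := by
          intro k hk
          simp only [indVec, Finset.mem_insert, Finset.mem_singleton]
          by_cases h1 : k = φ j hj
          · simp [h1]
          · simp [h1]
            intro h2
            exact absurd (h2 ▸ hk) hj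
        rw [Finset.sum_congr rfl this, Finset.sum_ite_eq' C _ (fun _ => (1:ℝ))]
        simp [hu]
    have htight : ∀ j, dot w (F (pfun j)) = β := by
      intro j
      rw [hFdot]
      rw [hw, dot_cliqueVec, dot_cliqueVec, hptight j]
      rw [hβdef]
      have : ∑ j_1 ∈ C, intCast q j_1 = ∑ k ∈ C, (q k : ℝ) := by
        apply Finset.sum_congr rfl; intro k _; rfl
      rw [this]
      ring
    obtain ⟨hβ, a, ha, htt⟩ := tight hd A K hK h0 w hww β hval
      (fun j => F (pfun j)) (fun j => ⟨pfun j, hpP j, rfl⟩) htight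
    have httj : ∀ j, dot (intCast a) (intCast q) + c * dot (intCast a) (pfun j) = 1 := by
      intro j
      rw [← hFdot]
      exact htt j
    set lam : ℝ := (a u₀ : ℝ) with hlam
    have hdotp : ∀ j (hj : j ∈ C), dot (intCast a) (pfun j) = (a j : ℝ) := by
      intro j hj
      rw [hp]
      dsimp only
      rw [dif_pos hj, dot_right_indVec]
      simp [intCast]
    have haC : ∀ j, j ∈ C → (a j : ℝ) = lam := by
      intro j hj
      have h1 := httj j
      have h2 := httj u₀
      rw [hdotp j hj] at h1
      rw [hdotp u₀ hu₀] at h2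
      rw [hlam]
      nlinarith
    have haNC : ∀ j, j ∉ C → (a j : ℝ) = 0 := by
      intro j hj
      have h1 := httj j
      have h2 := httj u₀
      rw [hdotp u₀ hu₀] at h2
      have h3 : dot (intCast a) (pfun j) = (a j : ℝ) + (a (φ j hj) : ℝ) := by
        rw [hp]
        dsimp only
        rw [dif_neg hj, dot_right_indVec]
        have hju : j ≠ φ j hj := fun h => hj (h ▸ (hφspec j hj).1)
        rw [Finset.sum_insert (by simp [hju]), Finset.sum_singleton]
        simp [intCast]
      rw [h3] at h1
      have h4 : (a (φ j hj) : ℝ) = lam := haC _ (hφspec j hj).1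
      have h5 : (a u₀ : ℝ) = lam := haC u₀ hu₀
      nlinarith
    have hdotq : dot (intCast a) (intCast q) = lam * (∑ k ∈ C, (q k : ℝ)) := by
      unfold dot
      rw [← Finset.sum_subset (Finset.subset_univ C)]
      · rw [Finset.mul_sum]
        apply Finset.sum_congr rfl
        intro k hk
        rw [show (intCast a k) = (a k : ℝ) from rfl, haC k hk]
        rfl
      · intro k _ hk
        simp [intCast, haNC k hk]
    -- equation at u₀ : lam * β = 1
    have heq : lam * β = 1 := by
      have h1 := httj u₀
      rw [hdotp u₀ hu₀, hdotq, haC u₀ hu₀] at h1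
      rw [hβdef]
      ring_nf
      ring_nf at h1
      linarith
    -- β as an integer
    have hβint : β = ((∑ k ∈ C, q k + c : ℤ) : ℝ) := by
      rw [hβdef]
      push_cast
      ring
    have hZ : a u₀ * (∑ k ∈ C, q k + (c:ℤ)) = 1 := by
      have : (a u₀ : ℝ) * ((∑ k ∈ C, q k + (c:ℤ) : ℤ) : ℝ) = 1 := by
        rw [← hβint]
        exact heq
      exact_mod_cast this
    have hβpos : (0:ℤ) < ∑ k ∈ C, q k + (c:ℤ) := by
      have : (0:ℝ) < ((∑ k ∈ C, q k + (c:ℤ) : ℤ) : ℝ) := by rw [← hβint]; exact hβ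
      exact_mod_cast this
    have hβ1 : ∑ k ∈ C, q k + (c:ℤ) = 1 := by
      rcases Int.eq_one_or_neg_one_of_mul_eq_one' hZ with ⟨_, h⟩ | ⟨_, h⟩
      · exact h
      · omega
    have hqsum : ∑ k ∈ C, q k = -(C.card : ℤ) := by
      rw [Finset.sum_congr rfl (fun k _ => claim1 k), Finset.sum_const]
      simp
    rw [hqsum] at hβ1
    omega
  intro C C' hC hC'
  have h1 := claim2 C hC
  have h2 := claim2 C' hC'
  have : (C.card : ℤ) = (C'.card : ℤ) := by omega
  exact_mod_cast this

end S11

/-- for a perfect graph `G` (in particular for the comparability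
graph of a poset, whose stable set polytope is the chain polytope), the stable
set polytope `P_G` is Gorenstein iff all inclusion-maximal cliques of `G` have
the same cardinality. -/
theorem stmt11 {d : ℕ} (G : SimpleGraph (Fin d)) (hG : IsPerfect G) :
    IsGorenstein (stableSetPolytope G) ↔
      ∀ C C' : Finset (Fin d), IsMaxClique G C → IsMaxClique G C' →
        C.card = C'.card := by
  constructor
  · exact S11.backward
  · exact S11.forward hG
end

section
/- Let G and H be perfect graphs on vertex set [d]. The unconditional reflexive polytopes U(P_G) and U(P_H) are unimodularly equivalent (i.e., related by a map x ↦ Wx + t with W ∈ SL_d(ℤ), t ∈ ℤ^d) if and only if G and H are isomorphic graphs. -/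
open Finset

/-- Two subsets of `ℝ^d` are unimodularly equivalent if one is the image of the
other under `x ↦ Wx + t` with `W ∈ SL_d(ℤ)` and `t ∈ ℤ^d`. -/
def UnimodularlyEquivalent {d : ℕ} (P Q : Set (Fin d → ℝ)) : Prop :=
  ∃ (W : Matrix (Fin d) (Fin d) ℤ) (t : Fin d → ℤ), W.det = 1 ∧
    (fun x => (W.map (fun z : ℤ => (z : ℝ))).mulVec x + intCast t) '' P = Q

-- small entries
def Sm {d : ℕ} (a : Fin d → ℤ) : Prop := ∀ i, a i = 0 ∨ a i = 1 ∨ a i = -1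
-- stable support
def Stb {d : ℕ} (G : SimpleGraph (Fin d)) (a : Fin d → ℤ) : Prop :=
  ∀ i j, a i ≠ 0 → a j ≠ 0 → ¬ G.Adj i j
def InL {d : ℕ} (G : SimpleGraph (Fin d)) (a : Fin d → ℤ) : Prop := Sm a ∧ Stb G a

lemma ssp_subset_box {d : ℕ} (G : SimpleGraph (Fin d)) :
    stableSetPolytope G ⊆ {x | ∀ i, 0 ≤ x i ∧ x i ≤ 1} := by
  apply convexHull_min
  · rintro x ⟨s, -, rfl⟩ i
    simp only [indVec]
    split_ifs <;> norm_num
  · intro x hx y hy a b ha hb hab i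
    have hx' := hx i; have hy' := hy i
    constructor
    · have := add_nonneg (mul_nonneg ha hx'.1) (mul_nonneg hb hy'.1)
      simpa using this
    · calc a * x i + b * y i ≤ a * 1 + b * 1 := by
            gcongr; exact hx'.2; exact hy'.2
        _ = 1 := by linarith

lemma ssp_subset_halfspace {d : ℕ} {G : SimpleGraph (Fin d)} {i j : Fin d} (hadj : G.Adj i j) :
    stableSetPolytope G ⊆ {x | x i + x j ≤ 1} := by
  apply convexHull_min
  · rintro x ⟨s, hs, rfl⟩
    simp only [indVec, Set.mem_setOf_eq]
    by_cases hi : i ∈ s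
    · by_cases hj : j ∈ s
      · exact absurd hadj (hs i hi j hj)
      · simp [hi, hj]
    · split_ifs <;> norm_num
  · exact convex_halfSpace_le (IsLinearMap.mk (by intro x y; simp; ring) (by intro c x; simp [mul_add])) 1

lemma sum_le_one_mem_ssp {d : ℕ} (G : SimpleGraph (Fin d)) (x : Fin d → ℝ)
    (hx0 : ∀ i, 0 ≤ x i) (hx1 : ∑ i, x i ≤ 1) : x ∈ stableSetPolytope G := by
  classical
  set w : Option (Fin d) → ℝ := fun o => o.elim (1 - ∑ i, x i) x with hw
  set z : Option (Fin d) → (Fin d → ℝ) := fun o => o.elim (indVec ∅) (fun i => indVec {i}) with hz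
  have hws : ∑ o : Option (Fin d), w o = 1 := by
    rw [Fintype.sum_option]; simp [hw]
  have hmem : (Finset.univ : Finset (Option (Fin d))).centerMass w z ∈ stableSetPolytope G := by
    apply Finset.centerMass_mem_convexHull
    · rintro (_ | i) -
      · simpa [hw] using hx1
      · exact hx0 i
    · rw [hws]; norm_num
    · rintro (_ | i) -
      · exact ⟨∅, by simp [IsStableSet], rfl⟩
      · refine ⟨{i}, ?_, rfl⟩
        intro a ha b hb
        simp only [Finset.mem_singleton] at ha hb
        subst ha; subst hb; exact G.irrefl
  convert hmem using 1
  rw [Finset.centerMass, hws]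
  funext k
  simp only [Finset.sum_apply, Pi.smul_apply, smul_eq_mul, one_smul, inv_one]
  rw [Fintype.sum_option]
  simp only [hw, hz, Option.elim]
  have : ∀ i, x i * indVec {i} k = if i = k then x i else 0 := by
    intro i
    simp only [indVec, Finset.mem_singleton]
    split_ifs with h1 h2 h2 <;> simp_all <;> grind
  rw [Finset.sum_congr rfl (fun i _ => this i)]
  simp [indVec]

lemma memU_iff {d : ℕ} (G : SimpleGraph (Fin d)) (a : Fin d → ℤ) :
    intCast a ∈ UPoly (stableSetPolytope G) ↔ InL G a := by
  classical
  constructor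
  · intro h
    have hbox := ssp_subset_box G h
    have hsm : Sm a := by
      intro i
      have := (hbox i).2
      have h0 := (hbox i).1
      simp only [absVec, intCast] at this
      rw [abs_le] at this
      have h1 : (-1 : ℝ) ≤ (a i : ℝ) := this.1
      have h2 : (a i : ℝ) ≤ 1 := this.2
      have h1' : (-1 : ℤ) ≤ a i := by exact_mod_cast h1
      have h2' : a i ≤ 1 := by exact_mod_cast h2
      omega
    refine ⟨hsm, ?_⟩
    intro i j hi hj hadj
    have := ssp_subset_halfspace hadj h
    simp only [absVec, intCast, Set.mem_setOf_eq] at this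
    have h1 : (1 : ℝ) ≤ |(a i : ℝ)| := by
      rw [← Int.cast_abs]; exact_mod_cast Int.one_le_abs hi
    have h2 : (1 : ℝ) ≤ |(a j : ℝ)| := by
      rw [← Int.cast_abs]; exact_mod_cast Int.one_le_abs hj
    linarith
  · rintro ⟨hsm, hstb⟩
    have : absVec (intCast a) = indVec (Finset.univ.filter (fun i => a i ≠ 0)) := by
      funext i
      simp only [absVec, intCast, indVec, Finset.mem_filter, Finset.mem_univ, true_and]
      rcases hsm i with h | h | h <;> simp [h]
    show absVec (intCast a) ∈ stableSetPolytope G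
    rw [this]
    apply subset_convexHull
    refine ⟨_, ?_, rfl⟩
    intro i hi j hj
    simp only [Finset.mem_filter] at hi hj
    exact hstb i j hi.2 hj.2
-- appended to aux1
lemma zero_mem_interior_U {d : ℕ} (G : SimpleGraph (Fin d)) :
    (0 : Fin d → ℝ) ∈ interior (UPoly (stableSetPolytope G)) := by
  have hOopen : IsOpen {x : Fin d → ℝ | ∑ i, |x i| < 1} := by
    apply isOpen_lt _ continuous_const
    exact continuous_finset_sum _ (fun i _ => (continuous_apply i).abs)
  have hsub : {x : Fin d → ℝ | ∑ i, |x i| < 1} ⊆ UPoly (stableSetPolytope G) := by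
    intro x hx
    show absVec x ∈ stableSetPolytope G
    exact sum_le_one_mem_ssp G _ (fun i => abs_nonneg _) (le_of_lt hx)
  have h0 : (0 : Fin d → ℝ) ∈ {x : Fin d → ℝ | ∑ i, |x i| < 1} := by simp
  exact interior_maximal hsub hOopen h0

lemma abs_coord_le_one {d : ℕ} {G : SimpleGraph (Fin d)} {x : Fin d → ℝ}
    (hx : x ∈ UPoly (stableSetPolytope G)) (i : Fin d) : |x i| ≤ 1 := by
  have := (ssp_subset_box G hx i).2
  simpa [absVec] using this

lemma interior_lattice_eq_zero {d : ℕ} {G : SimpleGraph (Fin d)} {a : Fin d → ℤ}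
    (ha : intCast a ∈ interior (UPoly (stableSetPolytope G))) : a = 0 := by
  funext i
  by_contra hne
  have hU : UPoly (stableSetPolytope G) ∈ nhds (intCast a) :=
    mem_interior_iff_mem_nhds.mp ha
  set c : ℝ → (Fin d → ℝ) := fun s => intCast a + s • (fun j => if j = i then (a i : ℝ) else 0)
    with hc
  have hcont : Continuous c := by
    apply continuous_const.add
    exact continuous_id.smul continuous_const
  have hc0 : c 0 = intCast a := by simp [hc]
  have htend : Filter.Tendsto c (nhds 0) (nhds (intCast a)) := by
    rw [← hc0]; exact hcont.tendsto 0
  have hev : ∀ᶠ s in nhds (0:ℝ), c s ∈ UPoly (stableSetPolytope G) := htend.eventually_mem hU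
  rw [Metric.eventually_nhds_iff] at hev
  obtain ⟨ε, hε, hball⟩ := hev
  have hmem : c (ε/2) ∈ UPoly (stableSetPolytope G) := by
    apply hball
    have : dist (ε/2) (0:ℝ) = ε/2 := by
      simp [Real.dist_eq, abs_div, abs_of_pos hε]
    rw [this]; linarith
  have hcoord := abs_coord_le_one hmem i
  have : c (ε/2) i = (a i : ℝ) * (1 + ε/2) := by
    simp [hc, intCast]; ring
  rw [this, abs_mul] at hcoord
  have h1 : (1:ℝ) ≤ |(a i : ℝ)| := by
    rw [← Int.cast_abs]; exact_mod_cast Int.one_le_abs hne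
  have h2 : |1 + ε/2| = 1 + ε/2 := abs_of_pos (by linarith)
  rw [h2] at hcoord
  nlinarith
-- single vector
def sgl {d : ℕ} (i : Fin d) (c : ℤ) : Fin d → ℤ := fun j => if j = i then c else 0

lemma InL_sgl {d : ℕ} (G : SimpleGraph (Fin d)) (i : Fin d) {c : ℤ}
    (hc : c = 1 ∨ c = -1) : InL G (sgl i c) := by
  constructor
  · intro j; simp only [sgl]; split_ifs <;> tauto
  · intro k l hk hl
    have hk' : k = i := by by_contra h; simp [sgl, h] at hk
    have hl' : l = i := by by_contra h; simp [sgl, h] at hl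
    subst hk'; subst hl'; exact G.irrefl

def IsAtomL {d : ℕ} (G : SimpleGraph (Fin d)) (a : Fin d → ℤ) : Prop :=
  InL G a ∧ a ≠ 0 ∧ ∀ b, InL G b → InL G (a - (2:ℤ) • b) → b = 0 ∨ b = a

lemma isAtomL_iff {d : ℕ} (G : SimpleGraph (Fin d)) (a : Fin d → ℤ) :
    IsAtomL G a ↔ ∃ i, a = sgl i 1 ∨ a = sgl i (-1) := by
  constructor
  · rintro ⟨⟨hsm, hstb⟩, hne, hmin⟩
    have : ∃ i, a i ≠ 0 := by
      by_contra h; push_neg at h; exact hne (funext fun i => h i)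
    obtain ⟨i, hi⟩ := this
    have hsupp : ∀ j, j ≠ i → a j = 0 := by
      intro j hji
      by_contra hj
      have hb : InL G (sgl i (a i)) := by
        apply InL_sgl
        rcases hsm i with h | h | h
        exacts [absurd h hi, Or.inl h, Or.inr h]
      have hb2 : InL G (a - (2:ℤ) • sgl i (a i)) := by
        constructor
        · intro k
          simp only [Pi.sub_apply, Pi.smul_apply, smul_eq_mul, sgl]
          split_ifs with h
          · subst h; rcases hsm k with h | h | h <;> omega
          · simpa using hsm k
        · intro k l hk hl
          apply hstb k l
          · by_cases h : k = i
            · subst h; simpa using hi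
            · simpa [sgl, h] using hk
          · by_cases h : l = i
            · subst h; simpa using hi
            · simpa [sgl, h] using hl
      rcases hmin _ hb hb2 with h | h
      · have := congrFun h i; simp [sgl] at this; exact hi this
      · have := congrFun h j; simp [sgl, hji] at this; exact hj this.symm
    have ha : a = sgl i (a i) := by
      funext j
      by_cases h : j = i
      · subst h; simp [sgl]
      · simp [sgl, h, hsupp j h]
    rcases hsm i with h | h | h
    · exact absurd h hi
    · exact ⟨i, Or.inl (by rw [ha, h])⟩
    · exact ⟨i, Or.inr (by rw [ha, h])⟩
  · rintro ⟨i, hc⟩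
    have hform : ∃ c : ℤ, (c = 1 ∨ c = -1) ∧ a = sgl i c := by
      rcases hc with h | h
      · exact ⟨1, Or.inl rfl, h⟩
      · exact ⟨-1, Or.inr rfl, h⟩
    obtain ⟨c, hc1, rfl⟩ := hform
    refine ⟨InL_sgl G i hc1, ?_, ?_⟩
    · intro h
      have := congrFun h i
      simp [sgl] at this
      rcases hc1 with h' | h' <;> omega
    · rintro b ⟨hbsm, -⟩ ⟨hb2sm, -⟩
      have hbj : ∀ j, j ≠ i → b j = 0 := by
        intro j hj
        have := hb2sm j
        simp only [Pi.sub_apply, Pi.smul_apply, smul_eq_mul, sgl, if_neg hj] at this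
        rcases hbsm j with h | h | h <;> omega
      have hbi : b i = 0 ∨ b i = c := by
        have := hb2sm i
        simp only [Pi.sub_apply, Pi.smul_apply, smul_eq_mul, sgl, if_pos rfl] at this
        rcases hbsm i with h | h | h <;> rcases hc1 with h' | h' <;> omega
      rcases hbi with h | h
      · left; funext j
        by_cases hj : j = i
        · subst hj; simpa using h
        · simpa using hbj j hj
      · right; funext j
        by_cases hj : j = i
        · subst hj; simp [sgl, h]
        · simp [sgl, hj, hbj j hj]
lemma matrix_inv {d : ℕ} {W : Matrix (Fin d) (Fin d) ℤ} (h : W.det = 1) :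
    ∃ V, W * V = 1 ∧ V * W = 1 := by
  have : IsUnit W := (Matrix.isUnit_iff_isUnit_det W).mpr (by rw [h]; exact isUnit_one)
  obtain ⟨u, hu⟩ := this
  exact ⟨(u⁻¹ : _).val, by rw [← hu]; exact u.mul_inv, by rw [← hu]; exact u.inv_mul⟩

lemma mapR_mul {d : ℕ} (A B : Matrix (Fin d) (Fin d) ℤ) :
    (A * B).map (fun z : ℤ => (z : ℝ)) =
      A.map (fun z : ℤ => (z : ℝ)) * B.map (fun z : ℤ => (z : ℝ)) := by
  ext i j
  simp only [Matrix.map_apply, Matrix.mul_apply]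
  push_cast
  rfl

lemma mapR_one {d : ℕ} :
    (1 : Matrix (Fin d) (Fin d) ℤ).map (fun z : ℤ => (z : ℝ)) = 1 := by
  ext i j
  simp only [Matrix.map_apply, Matrix.one_apply]
  split_ifs <;> simp

lemma intCast_mulVec {d : ℕ} (W : Matrix (Fin d) (Fin d) ℤ) (a : Fin d → ℤ) :
    (W.map (fun z : ℤ => (z : ℝ))).mulVec (intCast a) = intCast (W.mulVec a) := by
  funext i
  simp only [Matrix.mulVec, dotProduct, Matrix.map_apply, intCast]
  push_cast
  rfl

lemma continuous_mulVecR {d : ℕ} (M : Matrix (Fin d) (Fin d) ℝ) :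
    Continuous (fun x : Fin d → ℝ => M.mulVec x) := by
  apply continuous_pi
  intro i
  simp only [Matrix.mulVec, dotProduct]
  exact continuous_finset_sum _ fun j _ => continuous_const.mul (continuous_apply j)

lemma sgl_neg {d : ℕ} (i : Fin d) : sgl i (-1) = - sgl i 1 := by
  funext k; simp only [sgl, Pi.neg_apply]; split_ifs <;> simp

lemma sgl_one_inj {d : ℕ} {i i' : Fin d} (h : sgl i (1:ℤ) = sgl i' 1) : i = i' := by
  by_contra hne
  have := congrFun h i
  simp [sgl, hne] at this

lemma sgl_one_ne_neg {d : ℕ} (i i' : Fin d) : sgl i (1:ℤ) ≠ - sgl i' 1 := by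
  intro h
  have := congrFun h i
  simp only [sgl, if_pos rfl, Pi.neg_apply] at this
  split_ifs at this <;> omega

lemma InL_pair_iff {d : ℕ} (K : SimpleGraph (Fin d)) {i j : Fin d} (hij : i ≠ j) {c c' : ℤ}
    (hc : c = 1 ∨ c = -1) (hc' : c' = 1 ∨ c' = -1) :
    InL K (sgl i c + sgl j c') ↔ ¬ K.Adj i j := by
  have hvi : (sgl i c + sgl j c') i = c := by
    simp [sgl, hij]
  have hvj : (sgl i c + sgl j c') j = c' := by
    simp [sgl, Ne.symm hij]
  have hvo : ∀ k, k ≠ i → k ≠ j → (sgl i c + sgl j c') k = 0 := by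
    intro k h1 h2; simp [sgl, h1, h2]
  constructor
  · rintro ⟨-, hstb⟩
    exact hstb i j (by rw [hvi]; rcases hc with h | h <;> simp [h])
      (by rw [hvj]; rcases hc' with h | h <;> simp [h])
  · intro hadj
    constructor
    · intro k
      by_cases h1 : k = i
      · subst h1; rw [hvi]; tauto
      · by_cases h2 : k = j
        · subst h2; rw [hvj]; tauto
        · rw [hvo k h1 h2]; tauto
    · intro k l hk hl
      have key : ∀ m, (sgl i c + sgl j c') m ≠ 0 → m = i ∨ m = j := by
        intro m hm; by_contra h; push_neg at h; exact hm (hvo m h.1 h.2)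
      rcases key k hk with rfl | rfl <;> rcases key l hl with rfl | rfl
      · exact K.irrefl
      · exact hadj
      · exact fun h => hadj h.symm
      · exact K.irrefl

lemma forward_dir {d : ℕ} (G H : SimpleGraph (Fin d))
    (h : UnimodularlyEquivalent (UPoly (stableSetPolytope G)) (UPoly (stableSetPolytope H))) :
    Nonempty (G ≃g H) := by
  classical
  obtain ⟨W, t, hdet, himg⟩ := h
  obtain ⟨V, hWV, hVW⟩ := matrix_inv hdet
  set UG := UPoly (stableSetPolytope G) with hUG
  set UH := UPoly (stableSetPolytope H) with hUH
  set f : (Fin d → ℝ) → (Fin d → ℝ) :=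
    fun x => (W.map (fun z : ℤ => (z : ℝ))).mulVec x + intCast t with hf
  set g : (Fin d → ℝ) → (Fin d → ℝ) :=
    fun x => (V.map (fun z : ℤ => (z : ℝ))).mulVec (x - intCast t) with hg
  have hgf : Function.LeftInverse g f := by
    intro x
    simp only [hf, hg, add_sub_cancel_right]
    rw [Matrix.mulVec_mulVec, ← mapR_mul, hVW, mapR_one, Matrix.one_mulVec]
  have hfg : Function.RightInverse g f := by
    intro x
    simp only [hf, hg]
    rw [Matrix.mulVec_mulVec, ← mapR_mul, hWV, mapR_one, Matrix.one_mulVec, sub_add_cancel]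
  -- t = 0
  have hopen : IsOpen (f '' interior UG) := by
    rw [Set.image_eq_preimage_of_inverse hgf hfg]
    have hcg : Continuous g := (continuous_mulVecR _).comp (continuous_id.sub continuous_const)
    exact isOpen_interior.preimage hcg
  have hsub : f '' interior UG ⊆ interior UH := by
    apply interior_maximal _ hopen
    rw [← himg]
    exact Set.image_mono interior_subset
  have ht : intCast t ∈ interior UH := by
    have h0 : f 0 = intCast t := by simp [hf, Matrix.mulVec_zero]
    have : f 0 ∈ f '' interior UG := Set.mem_image_of_mem f (zero_mem_interior_U G)
    rw [h0] at this
    exact hsub this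
  have ht0 : t = 0 := interior_lattice_eq_zero ht
  subst ht0
  have hct : intCast (0 : Fin d → ℤ) = 0 := by funext i; simp [intCast]
  -- integer point transfer
  have hVWvec : ∀ a : Fin d → ℤ, V.mulVec (W.mulVec a) = a := by
    intro a; rw [Matrix.mulVec_mulVec, hVW, Matrix.one_mulVec]
  have hWVvec : ∀ a : Fin d → ℤ, W.mulVec (V.mulVec a) = a := by
    intro a; rw [Matrix.mulVec_mulVec, hWV, Matrix.one_mulVec]
  have hfInt : ∀ a : Fin d → ℤ, f (intCast a) = intCast (W.mulVec a) := by
    intro a; simp only [hf, hct, add_zero]; exact intCast_mulVec W a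
  have hmemW : ∀ a, InL G a → InL H (W.mulVec a) := by
    intro a ha
    rw [← memU_iff, ← hUH, ← himg, ← hfInt]
    exact Set.mem_image_of_mem f ((memU_iff G a).mpr ha)
  have hmemV : ∀ b, InL H b → InL G (V.mulVec b) := by
    intro b hb
    have hbU : intCast b ∈ UH := (memU_iff H b).mpr hb
    rw [← himg] at hbU
    obtain ⟨x, hx, hfx⟩ := hbU
    have hxg : x = intCast (V.mulVec b) := by
      have h1 := congrArg g hfx
      rw [hgf x] at h1
      rw [h1, hg]
      simp only [hct, sub_zero]
      exact intCast_mulVec V b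
    rw [hxg] at hx
    exact (memU_iff G _).mp hx
  have hIff : ∀ a, InL G a ↔ InL H (W.mulVec a) := fun a =>
    ⟨hmemW a, fun h => by have := hmemV _ h; rwa [hVWvec] at this⟩
  -- atoms transfer
  have hatom : ∀ a, IsAtomL G a → IsAtomL H (W.mulVec a) := by
    rintro a ⟨haL, hane, hamin⟩
    refine ⟨hmemW a haL, ?_, ?_⟩
    · intro h0
      apply hane
      have h1 := congrArg (V.mulVec) h0
      rw [hVWvec, Matrix.mulVec_zero] at h1
      exact h1
    · intro b hbL hb2L
      have hb' := hmemV b hbL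
      have key : V.mulVec (W.mulVec a - (2:ℤ) • b) = a - (2:ℤ) • V.mulVec b := by
        rw [Matrix.mulVec_sub, Matrix.mulVec_smul, hVWvec]
      have h2 := hmemV _ hb2L
      rw [key] at h2
      rcases hamin _ hb' h2 with h | h
      · left
        have h1 := congrArg (W.mulVec) h
        rwa [hWVvec, Matrix.mulVec_zero] at h1
      · right
        have h1 := congrArg (W.mulVec) h
        rwa [hWVvec] at h1
  -- build the bijection
  have hφex : ∀ i : Fin d, ∃ j, W.mulVec (sgl i 1) = sgl j 1 ∨ W.mulVec (sgl i 1) = sgl j (-1) := by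
    intro i
    have h1 : IsAtomL G (sgl i 1) := (isAtomL_iff G _).mpr ⟨i, Or.inl rfl⟩
    exact (isAtomL_iff H _).mp (hatom _ h1)
  choose φ hφ using hφex
  have hVφ : ∀ i, V.mulVec (sgl (φ i) 1) = sgl i 1 ∨ V.mulVec (sgl (φ i) 1) = - sgl i 1 := by
    intro i
    rcases hφ i with h | h
    · left; rw [← h, hVWvec]
    · right
      rw [sgl_neg] at h
      have h1 := congrArg (V.mulVec) h
      rw [hVWvec, Matrix.mulVec_neg] at h1
      rw [h1, neg_neg]
  have hinj : Function.Injective φ := by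
    intro i i' hii
    rcases hVφ i with h1 | h1 <;> rcases hVφ i' with h2 | h2 <;> rw [hii] at h1 <;>
      rw [h1] at h2
    · exact sgl_one_inj h2
    · exact absurd h2 (sgl_one_ne_neg i i')
    · exact absurd h2.symm (sgl_one_ne_neg i' i)
    · exact sgl_one_inj (neg_injective h2)
  have hbij : Function.Bijective φ := Finite.injective_iff_bijective.mp hinj
  have hadj : ∀ i j, H.Adj (φ i) (φ j) ↔ G.Adj i j := by
    intro i j
    by_cases hij : i = j
    · subst hij
      simp
    · have hφij : φ i ≠ φ j := fun hh => hij (hinj hh)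
      have key : (¬ G.Adj i j) ↔ ¬ H.Adj (φ i) (φ j) := by
        rw [← InL_pair_iff G hij (Or.inl rfl) (Or.inl rfl), hIff, Matrix.mulVec_add]
        rcases hφ i with h1 | h1 <;> rcases hφ j with h2 | h2 <;> rw [h1, h2] <;>
          [rw [InL_pair_iff H hφij (Or.inl rfl) (Or.inl rfl)];
           rw [InL_pair_iff H hφij (Or.inl rfl) (Or.inr rfl)];
           rw [InL_pair_iff H hφij (Or.inr rfl) (Or.inl rfl)];
           rw [InL_pair_iff H hφij (Or.inr rfl) (Or.inr rfl)]]
      exact (not_iff_not.mp key).symm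
  exact ⟨⟨Equiv.ofBijective φ hbij, hadj _ _⟩⟩
lemma ssp_transfer {d : ℕ} {G H : SimpleGraph (Fin d)} (π : Fin d ≃ Fin d)
    (hπ : ∀ a b, H.Adj (π a) (π b) ↔ G.Adj a b) :
    ∀ y ∈ stableSetPolytope G, (fun k => y (π.symm k)) ∈ stableSetPolytope H := by
  classical
  intro y hy
  set T : (Fin d → ℝ) →ₗ[ℝ] (Fin d → ℝ) := LinearMap.funLeft ℝ ℝ (fun k => π.symm k) with hT
  have hsub : stableSetPolytope G ⊆ T ⁻¹' (stableSetPolytope H) := by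
    apply convexHull_min
    · rintro x ⟨S, hS, rfl⟩
      show T (indVec S) ∈ stableSetPolytope H
      have himage : T (indVec S) = indVec (S.map π.toEmbedding) := by
        funext k
        simp only [hT, LinearMap.funLeft_apply, indVec, Finset.mem_map_equiv]
      rw [himage]
      apply subset_convexHull
      refine ⟨_, ?_, rfl⟩
      intro k hk l hl
      rw [Finset.mem_map_equiv] at hk hl
      intro hadj
      refine hS _ hk _ hl ((hπ _ _).mp ?_)
      rwa [Equiv.apply_symm_apply, Equiv.apply_symm_apply]
    · exact (convex_convexHull ℝ _).linear_preimage T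
  exact hsub hy

lemma backward_dir {d : ℕ} (G H : SimpleGraph (Fin d)) (e : G ≃g H) (ε : Fin d → ℤ)
    (hε : ∀ i, ε i = 1 ∨ ε i = -1)
    (hprod : (∏ i, ε i) * ((Equiv.Perm.sign (e.toEquiv) : ℤˣ) : ℤ) = 1) :
    UnimodularlyEquivalent (UPoly (stableSetPolytope G)) (UPoly (stableSetPolytope H)) := by
  classical
  set π : Equiv.Perm (Fin d) := e.toEquiv with hπdef
  set W : Matrix (Fin d) (Fin d) ℤ :=
    Matrix.of (fun k l => if l = π.symm k then ε k else 0) with hW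
  have hWdecomp : W = Matrix.diagonal ε * (Equiv.Perm.permMatrix ℤ π.symm) := by
    ext k l
    rw [Matrix.diagonal_mul]
    simp only [hW, Matrix.of_apply, Equiv.Perm.permMatrix, PEquiv.toMatrix_apply,
      Equiv.toPEquiv_apply, Option.mem_def, Option.some.injEq]
    by_cases h : l = π.symm k
    · rw [if_pos h, if_pos h.symm, mul_one]
    · rw [if_neg h, if_neg (fun hh => h hh.symm), mul_zero]
  have hdet : W.det = 1 := by
    rw [hWdecomp, Matrix.det_mul, Matrix.det_diagonal, Matrix.det_permutation,
      Equiv.Perm.sign_symm]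
    exact_mod_cast hprod
  refine ⟨W, 0, hdet, ?_⟩
  obtain ⟨V, hWV, hVW⟩ := matrix_inv hdet
  have hct : intCast (0 : Fin d → ℤ) = (0 : Fin d → ℝ) := by funext i; simp [intCast]
  set f : (Fin d → ℝ) → (Fin d → ℝ) :=
    fun x => (W.map (fun z : ℤ => (z : ℝ))).mulVec x + intCast 0 with hf
  set g : (Fin d → ℝ) → (Fin d → ℝ) :=
    fun x => (V.map (fun z : ℤ => (z : ℝ))).mulVec x with hg
  have hgf : Function.LeftInverse g f := by
    intro x
    simp only [hf, hg, hct, add_zero]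
    rw [Matrix.mulVec_mulVec, ← mapR_mul, hVW, mapR_one, Matrix.one_mulVec]
  have hfg : Function.RightInverse g f := by
    intro x
    simp only [hf, hg, hct, add_zero]
    rw [Matrix.mulVec_mulVec, ← mapR_mul, hWV, mapR_one, Matrix.one_mulVec]
  have hmul : ∀ x : Fin d → ℝ, f x = fun k => (ε k : ℝ) * x (π.symm k) := by
    intro x
    funext k
    simp only [hf, hct, add_zero, Matrix.mulVec, dotProduct, Matrix.map_apply, hW,
      Matrix.of_apply]
    rw [Finset.sum_congr rfl (g := fun l => if l = π.symm k then (ε k : ℝ) * x l else 0)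
      (fun l _ => by split_ifs with h <;> simp [h])]
    rw [Finset.sum_ite_eq' Finset.univ (π.symm k) (fun l => (ε k : ℝ) * x l)]
    simp
  have habs : ∀ x : Fin d → ℝ, absVec (f x) = fun k => absVec x (π.symm k) := by
    intro x
    funext k
    rw [hmul x]
    simp only [absVec, abs_mul]
    rcases hε k with h | h <;> rw [h] <;> norm_num
  have hpt : ∀ x : Fin d → ℝ, f x ∈ UPoly (stableSetPolytope H) ↔
      x ∈ UPoly (stableSetPolytope G) := by
    intro x
    constructor
    · intro hx
      show absVec x ∈ stableSetPolytope G
      have hx' : absVec (f x) ∈ stableSetPolytope H := hx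
      rw [habs x] at hx'
      have hπ' : ∀ a b, G.Adj (π.symm a) (π.symm b) ↔ H.Adj a b := by
        intro a b
        rw [← e.map_rel_iff]
        show H.Adj (π (π.symm a)) (π (π.symm b)) ↔ _
        rw [Equiv.apply_symm_apply, Equiv.apply_symm_apply]
      have := ssp_transfer π.symm hπ' _ hx'
      have heq : (fun k => (fun k' => absVec x (π.symm k')) (π.symm.symm k)) = absVec x := by
        funext k
        simp
      rwa [heq] at this
    · intro hx
      show absVec (f x) ∈ stableSetPolytope H
      rw [habs x]
      exact ssp_transfer π (fun a b => e.map_rel_iff) _ hx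
  rw [Set.image_eq_preimage_of_inverse hgf hfg]
  ext x
  show g x ∈ UPoly (stableSetPolytope G) ↔ x ∈ UPoly (stableSetPolytope H)
  rw [← hpt (g x), hfg x]

/-- for perfect graphs `G`, `H` on `[d]`, the unconditional
reflexive polytopes `U(P_G)` and `U(P_H)` are unimodularly equivalent iff
`G ≅ H`. -/
theorem stmt12 {d : ℕ} (G H : SimpleGraph (Fin d)) (hG : IsPerfect G)
    (hH : IsPerfect H) :
    UnimodularlyEquivalent (UPoly (stableSetPolytope G)) (UPoly (stableSetPolytope H)) ↔
      Nonempty (G ≃g H) := by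

  constructor
  · exact fun h => forward_dir G H h
  · rintro ⟨e⟩
    rcases Nat.eq_zero_or_pos d with h0 | h0
    · subst h0
      apply backward_dir G H e (fun _ => 1) (fun _ => Or.inl rfl)
      have : e.toEquiv = Equiv.refl (Fin 0) := Subsingleton.elim _ _
      rw [this]
      simp
    · rcases Int.units_eq_one_or (Equiv.Perm.sign e.toEquiv) with hs | hs
      · apply backward_dir G H e (fun _ => 1) (fun _ => Or.inl rfl)
        rw [hs]; simp
      · set i₀ : Fin d := ⟨0, h0⟩
        apply backward_dir G H e (fun i => if i = i₀ then -1 else 1)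
          (fun i => by by_cases h : i = i₀ <;> simp [h])
        rw [hs, Finset.prod_ite_eq' Finset.univ i₀ (fun _ => (-1:ℤ))]
        simp
end

section
/- Every unconditional reflexive polytope P ⊂ ℝ^d satisfies C_d* ⊆ P ⊆ C_d, where C_d = [−1,1]^d is the cube and C_d* = conv{±e_1,...,±e_d} the crosspolytope. -/
open Finset

lemma dot_smul_single {d : ℕ} (a : Fin d → ℝ) (i : Fin d) (t : ℝ) :
    dot a (t • (Pi.single i 1 : Fin d → ℝ)) = t * a i := by
  simp [dot, Pi.single_apply, mul_ite, mul_comm]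

/-- every unconditional reflexive polytope is sandwiched between
the crosspolytope and the cube. -/
theorem stmt13 {d : ℕ} (P : Set (Fin d → ℝ)) (hlat : IsLatticePolytope P)
    (huncond : Unconditional P) (hrefl : IsReflexive P) :
    convexHull ℝ {x : Fin d → ℝ | ∃ i, x = Pi.single i 1 ∨ x = -Pi.single i 1} ⊆ P ∧
      P ⊆ {x | ∀ i, |x i| ≤ 1} := by
  obtain ⟨V, hVne, hPV⟩ := hlat
  obtain ⟨h0, A, hPA⟩ := hrefl
  have hconv : Convex ℝ P := hPV ▸ convex_convexHull ℝ _
  have h0P : (0 : Fin d → ℝ) ∈ P := interior_subset h0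
  -- absolute value of a point stays in P
  have habs : ∀ x ∈ P, absVec x ∈ P := by
    intro x hx
    have h := huncond (fun j => if 0 ≤ x j then 1 else -1)
      (fun j => by by_cases h : 0 ≤ x j <;> simp [h]) x hx
    convert h using 1
    funext j
    by_cases h' : 0 ≤ x j
    · simp [absVec, sflip, h', abs_of_nonneg h']
    · simp [absVec, sflip, h', abs_of_neg (lt_of_not_ge h')]
  -- axis points |x i| • e_i stay in P
  have haxis : ∀ x ∈ P, ∀ i, |x i| • (Pi.single i 1 : Fin d → ℝ) ∈ P := by
    intro x hx i
    have hy := habs x hx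
    have hz := huncond (fun j => if j = i then 1 else -1)
      (fun j => by by_cases h : j = i <;> simp [h]) _ hy
    have hmid := hconv hy hz (by norm_num : (0:ℝ) ≤ 1/2) (by norm_num : (0:ℝ) ≤ 1/2)
      (by norm_num)
    convert hmid using 1
    funext j
    rcases eq_or_ne j i with rfl | h
    · simp [sflip, absVec, Pi.single_eq_same]; ring
    · simp [sflip, absVec, h, Pi.single_eq_of_ne h]
  -- scaling down
  have hscale : ∀ p ∈ P, ∀ t : ℝ, 0 ≤ t → t ≤ 1 → t • p ∈ P := by
    intro p hp t ht ht1
    have := hconv h0P hp (by linarith : (0:ℝ) ≤ 1 - t) ht (by ring)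
    simpa using this
  -- negation
  have hneg : ∀ p ∈ P, -p ∈ P := by
    intro p hp
    have h := huncond (fun _ => -1) (fun _ => Or.inr rfl) p hp
    convert h using 1
    funext j; simp [sflip]
  -- each coordinate direction has a vertex with nonzero coordinate
  have hvi : ∀ i : Fin d, ∃ v ∈ V, v i ≠ 0 := by
    intro i
    by_contra h
    push_neg at h
    have hsub : P ⊆ {x : Fin d → ℝ | x i = 0} := by
      rw [hPV]
      apply convexHull_min
      · rintro _ ⟨v, hv, rfl⟩
        simp [intCast, h v hv]
      · intro a ha b hb s t _ _ _
        simp only [Set.mem_setOf_eq] at *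
        simp [ha, hb]
    have h0' : (0 : Fin d → ℝ) ∈ interior {x : Fin d → ℝ | x i = 0} :=
      interior_mono hsub h0
    rw [mem_interior_iff_mem_nhds, Metric.mem_nhds_iff] at h0'
    obtain ⟨ε, hε, hball⟩ := h0'
    have hmem : (Pi.single i (ε/2) : Fin d → ℝ) ∈ Metric.ball (0 : Fin d → ℝ) ε := by
      rw [Metric.mem_ball, dist_zero_right, pi_norm_lt_iff hε]
      intro j
      rcases eq_or_ne j i with rfl | h'
      · simp [Real.norm_eq_abs, abs_of_pos hε]; linarith
      · simp [Pi.single_eq_of_ne h', hε]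
    have := hball hmem
    simp only [Set.mem_setOf_eq, Pi.single_eq_same] at this
    linarith
  -- e_i ∈ P
  have hei : ∀ i : Fin d, (Pi.single i 1 : Fin d → ℝ) ∈ P := by
    intro i
    obtain ⟨v, hv, hvi0⟩ := hvi i
    have hvP : intCast v ∈ P := by
      rw [hPV]
      exact subset_convexHull ℝ _ (Set.mem_image_of_mem _ hv)
    have h1 := haxis _ hvP i
    have hge : (1:ℝ) ≤ |intCast v i| := by
      have h1 : (1:ℤ) ≤ |v i| := Int.one_le_abs hvi0
      have h2 : (1:ℝ) ≤ |(v i : ℝ)| := by exact_mod_cast h1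
      simpa [intCast] using h2
    have hpos : (0:ℝ) < |intCast v i| := lt_of_lt_of_le one_pos hge
    have := hscale _ h1 (|intCast v i|)⁻¹ (inv_nonneg.mpr hpos.le)
      (inv_le_one_of_one_le₀ hge)
    rwa [smul_smul, inv_mul_cancel₀ hpos.ne', one_smul] at this
  -- for each i, some a ∈ A has a i ≥ 1
  have hai : ∀ i : Fin d, ∃ a ∈ A, 1 ≤ a i := by
    intro i
    by_contra h
    push_neg at h
    have hray : ∀ t : ℝ, 0 ≤ t → t • (Pi.single i 1 : Fin d → ℝ) ∈ P := by
      intro t ht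
      rw [hPA]
      intro a ha
      rw [dot_smul_single]
      have hA : a i ≤ 0 := by
        have := h a ha
        omega
      have hc : (a i : ℝ) ≤ 0 := by exact_mod_cast hA
      have hrfl : intCast a i = (a i : ℝ) := rfl
      rw [hrfl]
      nlinarith [mul_nonneg ht (neg_nonneg.2 hc)]
    have hcpt : IsCompact P := by
      rw [hPV]
      exact (((V : Set (Fin d → ℤ)).toFinite).image intCast).isCompact_convexHull (𝕜 := ℝ)
    obtain ⟨r, hr⟩ := hcpt.isBounded.subset_closedBall 0
    set t : ℝ := max r 0 + 1 with htdef
    have ht0 : 0 ≤ t := by positivity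
    have hmem := hr (hray t ht0)
    rw [Metric.mem_closedBall, dist_zero_right] at hmem
    have hcoord : ‖(t • (Pi.single i 1 : Fin d → ℝ)) i‖ ≤ ‖t • (Pi.single i 1 : Fin d → ℝ)‖ :=
      norm_le_pi_norm _ i
    simp only [Pi.smul_apply, Pi.single_eq_same, smul_eq_mul, mul_one,
      Real.norm_eq_abs, abs_of_nonneg ht0] at hcoord
    have : t ≤ r := le_trans hcoord hmem
    have : r < t := by
      rw [htdef]
      have : r ≤ max r 0 := le_max_left r 0
      linarith
    linarith
  constructor
  · apply convexHull_min _ hconv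
    rintro x ⟨i, rfl | rfl⟩
    · exact hei i
    · exact hneg _ (hei i)
  · intro x hx i
    obtain ⟨a, ha, hai1⟩ := hai i
    have hy := haxis x hx i
    rw [hPA] at hy
    have := hy a ha
    rw [dot_smul_single] at this
    have hcast : (1:ℝ) ≤ (a i : ℝ) := by exact_mod_cast hai1
    have hrfl : intCast a i = (a i : ℝ) := rfl
    rw [hrfl] at this
    nlinarith [abs_nonneg (x i), mul_le_mul_of_nonneg_left hcast (abs_nonneg (x i))]
end

section
/- For a bipartite graph G = (V,E), the matching polytope equals {x ∈ ℝ^E_{≥0} : Σ_{e ∋ v} x_e ≤ 1 for all v ∈ V}. -/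
open Finset

/-- A matching: a set of pairwise disjoint edges of `G`. -/
def IsMatchingSet {V : Type*} [Fintype V] [DecidableEq V]
    (G : SimpleGraph V) [DecidableRel G.Adj] (M : Finset (Sym2 V)) : Prop :=
  M ⊆ G.edgeFinset ∧ ∀ e ∈ M, ∀ f ∈ M, e ≠ f → ∀ v : V, ¬(v ∈ e ∧ v ∈ f)

/-- The matching polytope of `G`, living in `ℝ^{Sym2 V}` and supported on the
edge set: the convex hull of indicator vectors of matchings. -/
def matchingPolytope {V : Type*} [Fintype V] [DecidableEq V]
    (G : SimpleGraph V) [DecidableRel G.Adj] : Set (Sym2 V → ℝ) :=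
  convexHull ℝ {x | ∃ M : Finset (Sym2 V), IsMatchingSet G M ∧
    x = fun e => if e ∈ M then 1 else 0}

section Aux

variable {V : Type*} [Fintype V] [DecidableEq V]
  (G : SimpleGraph V) [DecidableRel G.Adj]

/-- the candidate matching obtained from an injection `f`, keeping only
`false`-colored starting points and genuine edges. -/
def permMatchingSet (c : V → Bool) (f : V → V) : Finset (Sym2 V) :=
  (univ.filter fun a => c a = false ∧ s(a, f a) ∈ G.edgeFinset).image fun a => s(a, f a)

lemma permMatchingSet_isMatching (c : V → Bool) (hc : ∀ u v, G.Adj u v → c u ≠ c v)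
    (f : V → V) (hf : Function.Injective f) :
    IsMatchingSet G (permMatchingSet G c f) := by
  constructor
  · intro e he
    simp only [permMatchingSet, mem_image, mem_filter, mem_univ, true_and] at he
    obtain ⟨a, ⟨-, ha2⟩, rfl⟩ := he
    exact ha2
  · intro e he f' hf' hef v hv
    simp only [permMatchingSet, mem_image, mem_filter, mem_univ, true_and] at he hf'
    obtain ⟨a, ⟨ha1, ha2⟩, rfl⟩ := he
    obtain ⟨b, ⟨hb1, hb2⟩, rfl⟩ := hf'
    rw [SimpleGraph.mem_edgeFinset, SimpleGraph.mem_edgeSet] at ha2 hb2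
    have hca : c (f a) = true := by
      have := hc _ _ ha2; rw [ha1] at this
      exact (Bool.not_eq_false _).mp (Ne.symm this)
    have hcb : c (f b) = true := by
      have := hc _ _ hb2; rw [hb1] at this
      exact (Bool.not_eq_false _).mp (Ne.symm this)
    have hab : a ≠ b := fun h => hef (by rw [h])
    rw [Sym2.mem_iff, Sym2.mem_iff] at hv
    obtain ⟨h1 | h1, h2 | h2⟩ := hv
    · exact hab (h1.symm.trans h2)
    · rw [← h2, h1, ha1] at hcb; exact Bool.false_ne_true hcb
    · rw [← h1, h2, hb1] at hca; exact Bool.false_ne_true hca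
    · exact hab (hf (h1.symm.trans h2))

lemma mem_permMatchingSet_iff (c : V → Bool) (f : V → V) {u v : V}
    (huv : G.Adj u v) (hcu : c u = false) (hcv : c v = true) :
    s(u, v) ∈ permMatchingSet G c f ↔ f u = v := by
  simp only [permMatchingSet, mem_image, mem_filter, mem_univ, true_and]
  constructor
  · rintro ⟨a, ⟨ha1, _⟩, he⟩
    rw [Sym2.eq_iff] at he
    rcases he with ⟨rfl, h⟩ | ⟨rfl, h⟩
    · exact h
    · rw [hcv] at ha1; simp at ha1
  · intro h
    exact ⟨u, ⟨hcu, by rw [h]; exact SimpleGraph.mem_edgeFinset.mpr huv⟩, by rw [h]⟩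

lemma sum_incident_eq (x : Sym2 V → ℝ) (hx : ∀ e ∉ G.edgeFinset, x e = 0) (v : V) :
    ∑ u ∈ univ.erase v, x s(v, u)
      = ∑ e ∈ G.edgeFinset.filter (fun e => v ∈ e), x e := by
  have h1 : ∑ u ∈ univ.erase v, x s(v, u) = ∑ u ∈ G.neighborFinset v, x s(v, u) := by
    refine (Finset.sum_subset ?_ ?_).symm
    · intro u hu
      rw [SimpleGraph.mem_neighborFinset] at hu
      exact mem_erase.mpr ⟨hu.ne', mem_univ u⟩
    · intro u _ hu
      rw [SimpleGraph.mem_neighborFinset] at hu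
      exact hx _ (by simpa [SimpleGraph.mem_edgeFinset] using hu)
  have h2 : (G.neighborFinset v).image (fun u => s(v, u))
      = G.edgeFinset.filter (fun e => v ∈ e) := by
    ext e
    simp only [mem_image, SimpleGraph.mem_neighborFinset, mem_filter,
      SimpleGraph.mem_edgeFinset]
    constructor
    · rintro ⟨u, hu, rfl⟩
      exact ⟨hu, Sym2.mem_mk_left v u⟩
    · rintro ⟨he, hv⟩
      refine ⟨Sym2.Mem.other hv, ?_, Sym2.other_spec hv⟩
      have := Sym2.other_spec hv
      rw [← this] at he
      exact he
  rw [h1, ← h2, Finset.sum_image]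
  intro a _ b _ hab
  exact Sym2.congr_right.mp hab

end Aux

/-- for a bipartite graph, the matching polytope is given by
nonnegativity, support on edges, and the degree inequalities at each vertex. -/
theorem stmt16 {V : Type*} [Fintype V] [DecidableEq V]
    (G : SimpleGraph V) [DecidableRel G.Adj]
    (hbip : ∃ c : V → Bool, ∀ u v, G.Adj u v → c u ≠ c v) :
    matchingPolytope G =
      {x | (∀ e, 0 ≤ x e) ∧ (∀ e ∉ G.edgeFinset, x e = 0) ∧
        ∀ v : V, ∑ e ∈ G.edgeFinset.filter (fun e => v ∈ e), x e ≤ 1} := by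
  obtain ⟨c, hc⟩ := hbip
  apply Set.eq_of_subset_of_subset
  · -- easy direction
    apply convexHull_min
    · rintro y ⟨M, ⟨hM1, hM2⟩, rfl⟩
      refine ⟨fun e => by positivity, fun e he => if_neg (fun h => he (hM1 h)), fun v => ?_⟩
      have hcard : ((G.edgeFinset.filter (fun e => v ∈ e)).filter (fun e => e ∈ M)).card ≤ 1 := by
        refine Finset.card_le_one.mpr ?_
        intro e he f hf
        simp only [mem_filter] at he hf
        by_contra hef
        exact hM2 e he.2 f hf.2 hef v ⟨he.1.2, hf.1.2⟩
      calc ∑ e ∈ G.edgeFinset.filter (fun e => v ∈ e),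
              (fun e => if e ∈ M then (1:ℝ) else 0) e
          = ((G.edgeFinset.filter (fun e => v ∈ e)).filter (fun e => e ∈ M)).card := by
            rw [Finset.sum_boole]
        _ ≤ 1 := by exact_mod_cast hcard
    · intro y hy z hz a b ha hb hab
      refine ⟨fun e => ?_, fun e he => ?_, fun v => ?_⟩
      · simp only [Pi.add_apply, Pi.smul_apply, smul_eq_mul]
        exact add_nonneg (mul_nonneg ha (hy.1 e)) (mul_nonneg hb (hz.1 e))
      · simp only [Pi.add_apply, Pi.smul_apply, smul_eq_mul, hy.2.1 e he, hz.2.1 e he,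
          mul_zero, add_zero]
      · simp only [Pi.add_apply, Pi.smul_apply, smul_eq_mul]
        rw [Finset.sum_add_distrib, ← Finset.mul_sum, ← Finset.mul_sum]
        calc a * ∑ e ∈ G.edgeFinset.filter (fun e => v ∈ e), y e
              + b * ∑ e ∈ G.edgeFinset.filter (fun e => v ∈ e), z e
            ≤ a * 1 + b * 1 := by
              gcongr
              exacts [hy.2.2 v, hz.2.2 v]
          _ = 1 := by rw [mul_one, mul_one, hab]
  · -- hard direction
    rintro x ⟨hx0, hxe, hxs⟩
    -- the doubly stochastic matrix
    set M : Matrix V V ℝ := Matrix.of fun u w =>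
      if u = w then 1 - ∑ e ∈ G.edgeFinset.filter (fun e => u ∈ e), x e else x s(u, w)
      with hMdef
    have hMsymm : ∀ u w, M u w = M w u := by
      intro u w
      by_cases h : u = w
      · subst h; rfl
      · simp only [hMdef, Matrix.of_apply, if_neg h, if_neg (Ne.symm h)]
        rw [Sym2.eq_swap]
    have hMrow : ∀ u, ∑ w, M u w = 1 := by
      intro u
      rw [← Finset.add_sum_erase _ _ (mem_univ u)]
      have h1 : M u u = 1 - ∑ e ∈ G.edgeFinset.filter (fun e => u ∈ e), x e := by
        simp [hMdef]
      have h2 : ∑ w ∈ univ.erase u, M u w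
          = ∑ e ∈ G.edgeFinset.filter (fun e => u ∈ e), x e := by
        rw [← sum_incident_eq G x hxe u]
        refine Finset.sum_congr rfl fun w hw => ?_
        rw [mem_erase] at hw
        simp [hMdef, Ne.symm hw.1]
      rw [h1, h2]; ring
    have hM : M ∈ doublyStochastic ℝ V := by
      rw [mem_doublyStochastic_iff_sum]
      refine ⟨fun i j => ?_, hMrow, fun j => ?_⟩
      · by_cases h : i = j
        · subst h
          have hii : M i i = 1 - ∑ e ∈ G.edgeFinset.filter (fun e => i ∈ e), x e := by
            simp [hMdef]
          rw [hii]
          linarith [hxs i]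
        · simp only [hMdef, Matrix.of_apply, if_neg h]
          exact hx0 _
      · rw [← hMrow j]
        exact Finset.sum_congr rfl fun i _ => hMsymm i j
    obtain ⟨w, hw0, hw1, hwM⟩ := exists_eq_sum_perm_of_mem_doublyStochastic hM
    have hperm : ∀ (σ : Equiv.Perm V) (u v : V),
        σ.permMatrix ℝ u v = if σ u = v then 1 else 0 := by
      intro σ u v
      simp [Equiv.Perm.permMatrix, PEquiv.toMatrix_apply, Equiv.toPEquiv_apply, Option.mem_def]
    have hMentry : ∀ u v : V, ∑ σ : Equiv.Perm V, w σ * (if σ u = v then (1:ℝ) else 0)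
        = M u v := by
      intro u v
      have := congrFun (congrFun hwM u) v
      rw [Matrix.sum_apply] at this
      simp only [Matrix.smul_apply, smul_eq_mul, hperm] at this
      exact this
    -- the family of matchings
    set z : Equiv.Perm V × Bool → (Sym2 V → ℝ) := fun p => fun e =>
      if e ∈ permMatchingSet G c (if p.2 then ⇑p.1 else ⇑p.1⁻¹) then 1 else 0
      with hzdef
    refine mem_convexHull_of_exists_fintype (fun p => w p.1 / 2) z
      (fun p => by have := hw0 p.1; positivity) ?_ ?_ ?_
    · rw [Fintype.sum_prod_type]
      simp only [Fintype.sum_bool]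
      rw [← hw1]
      exact Finset.sum_congr rfl fun σ _ => by ring
    · rintro ⟨σ, b⟩
      refine ⟨permMatchingSet G c (if b then ⇑σ else ⇑σ⁻¹),
        permMatchingSet_isMatching G c hc _ ?_, rfl⟩
      cases b
      · exact σ⁻¹.injective
      · exact σ.injective
    · -- the main computation
      have key : ∀ u v : V, G.Adj u v → c u = false →
          (∑ p : Equiv.Perm V × Bool, (w p.1 / 2) • z p) s(u, v) = x s(u, v) := by
        intro u v huv hcu
        have hcv : c v = true := by
          have := hc _ _ huv; rw [hcu] at this
          exact (Bool.not_eq_false _).mp (Ne.symm this)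
        rw [Finset.sum_apply]
        simp only [Pi.smul_apply, smul_eq_mul]
        rw [Fintype.sum_prod_type]
        simp only [Fintype.sum_bool, hzdef]
        simp only [Bool.false_eq_true, if_false, if_true]
        simp only [mem_permMatchingSet_iff G c _ huv hcu hcv]
        have hswap : ∀ σ : Equiv.Perm V, (σ⁻¹ u = v) ↔ (σ v = u) := by
          intro σ
          constructor
          · intro h; rw [← h]; simp
          · intro h; rw [← h]; simp
        have hsum : ∑ σ : Equiv.Perm V,
            (w σ / 2 * (if σ u = v then (1:ℝ) else 0)
              + w σ / 2 * (if σ⁻¹ u = v then (1:ℝ) else 0))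
            = (∑ σ : Equiv.Perm V, w σ * (if σ u = v then (1:ℝ) else 0)) / 2
              + (∑ σ : Equiv.Perm V, w σ * (if σ v = u then (1:ℝ) else 0)) / 2 := by
          rw [Finset.sum_add_distrib, Finset.sum_div, Finset.sum_div]
          congr 1
          · exact Finset.sum_congr rfl fun σ _ => by ring
          · refine Finset.sum_congr rfl fun σ _ => ?_
            rw [if_congr (hswap σ) rfl rfl]
            ring
        rw [hsum, hMentry u v, hMentry v u]
        have huv' : u ≠ v := huv.ne
        have h1 : M u v = x s(u, v) := by simp [hMdef, huv']
        have h2 : M v u = x s(v, u) := by simp [hMdef, Ne.symm huv']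
        rw [h1, h2, Sym2.eq_swap]
        ring
      funext e
      induction e using Sym2.ind with
      | _ u v =>
        by_cases he : s(u, v) ∈ G.edgeFinset
        · have huv : G.Adj u v := SimpleGraph.mem_edgeFinset.mp he
          cases hcu : c u
          · exact key u v huv hcu
          · have hcv : c v = false := by
              have := hc _ _ huv; rw [hcu] at this
              exact (Bool.not_eq_true _).mp this.symm
            rw [Sym2.eq_swap]
            exact key v u huv.symm hcv
        · rw [hxe _ he, Finset.sum_apply]
          refine Finset.sum_eq_zero fun p _ => ?_
          simp only [Pi.smul_apply, smul_eq_mul, hzdef]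
          obtain ⟨σ, b⟩ := p
          cases b
          · simp only [Bool.false_eq_true, if_false]
            rw [if_neg
              (fun hmem => he ((permMatchingSet_isMatching G c hc _ σ⁻¹.injective).1 hmem)),
              mul_zero]
          · simp only [if_true]
            rw [if_neg
              (fun hmem => he ((permMatchingSet_isMatching G c hc _ σ.injective).1 hmem)),
              mul_zero]
end
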